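/- arXiv:2505.15059 — 4 statements merged into one kernel-verified Lean document; each statement's English description precedes it below -/
import Mathlib

section
/- Let M̃_{(i,j)} be the Metropolis–Hastings chain on ℝ^d with symmetric Gaussian proposal q(x,y) = N(y; x, ηI) targeting the Gaussian density p̃_{(i,j)} of N(μ_j, β_i⁻¹Σ), where 0 < β_i ≤ 1. Let X⁰ = { x ∈ ℝ^d : ‖x‖ ≤ R } and suppose 0 < η ≤ R². Then the X⁰-restricted spectral gap of M̃_{(i,j)} satisfies SpecGap_{X⁰}(M̃_{(i,j)}) ≥ γ_min^{d/2} η^{3/2} / (13 R^{d+3}), where γ_min is the smallest eigenvalue of Σ. -/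
open MeasureTheory Matrix

noncomputable section

/-- Euclidean norm of a vector in `ℝ^d`. -/
def euclNorm {d : ℕ} (v : Fin d → ℝ) : ℝ := Real.sqrt (∑ k, v k ^ 2)

/-- Quadratic form `v ↦ vᵀ Σ⁻¹ v`. -/
def quadForm {d : ℕ} (Sig : Matrix (Fin d) (Fin d) ℝ) (v : Fin d → ℝ) : ℝ :=
  v ⬝ᵥ (Sig⁻¹ *ᵥ v)

/-- Density of the Gaussian distribution `N(μ, β⁻¹ Σ)` on `ℝ^d`. -/
def gaussDens {d : ℕ} (Sig : Matrix (Fin d) (Fin d) ℝ) (β : ℝ) (μ x : Fin d → ℝ) : ℝ :=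
  (β / (2 * Real.pi)) ^ ((d : ℝ) / 2) / Real.sqrt Sig.det *
    Real.exp (-(β / 2) * quadForm Sig (x - μ))

/-- Density of the symmetric Gaussian proposal `N(y; x, ηI)`. -/
def propDens (d : ℕ) (η : ℝ) (x y : Fin d → ℝ) : ℝ :=
  (2 * Real.pi * η) ^ (-(d : ℝ) / 2) * Real.exp (-(∑ k, (y k - x k) ^ 2) / (2 * η))

/-- `X⁰`-restricted Dirichlet form of the Metropolis–Hastings chain with symmetric
Gaussian proposal of step size `η` and target density `π`. -/
def mhRestDirichlet {d : ℕ} (η : ℝ) (π : (Fin d → ℝ) → ℝ) (X0 : Set (Fin d → ℝ))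
    (g : (Fin d → ℝ) → ℝ) : ℝ :=
  (1 / 2) * ∫ x in X0, ∫ y in X0, (g x - g y) ^ 2 * propDens d η x y * min (π x) (π y)

/-- `X⁰`-restricted variance with respect to the density `π`. -/
def restVarDens {d : ℕ} (π : (Fin d → ℝ) → ℝ) (X0 : Set (Fin d → ℝ))
    (g : (Fin d → ℝ) → ℝ) : ℝ :=
  (1 / 2) * ∫ x in X0, ∫ y in X0, (g x - g y) ^ 2 * π x * π y


namespace SG
open Real

lemma log_ge_artanh {x : ℝ} (hx : 1 ≤ x) : 2*(x-1)/(x+1) ≤ Real.log x := by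
  have key : ∀ y ∈ Set.Ici (1:ℝ), 0 ≤ Real.log y - 2 + 4*(y+1)⁻¹ := by
    have hmono : MonotoneOn (fun y : ℝ => Real.log y - 2 + 4*(y+1)⁻¹) (Set.Ici 1) := by
      apply monotoneOn_of_deriv_nonneg (convex_Ici 1)
      · apply ContinuousOn.add
        · apply ContinuousOn.sub
          · exact Real.continuousOn_log.mono (by intro y hy; simp at hy ⊢; intro h; linarith)
          · exact continuousOn_const
        · apply ContinuousOn.mul continuousOn_const
          apply ContinuousOn.inv₀ (by fun_prop)
          intro y hy; simp at hy; intro h; linarith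
      · intro y hy
        simp only [interior_Ici, Set.mem_Ioi] at hy
        have hy0 : y ≠ 0 := by intro h; rw [h] at hy; linarith
        have hy1 : y + 1 ≠ 0 := by intro h; nlinarith
        apply DifferentiableAt.differentiableWithinAt
        apply DifferentiableAt.add
        · exact DifferentiableAt.sub (Real.differentiableAt_log hy0) (differentiableAt_const _)
        · exact DifferentiableAt.const_mul (DifferentiableAt.inv ((differentiableAt_id.add_const 1 : DifferentiableAt ℝ (fun y : ℝ => y + 1) y)) hy1) _
      · intro y hy
        simp only [interior_Ici, Set.mem_Ioi] at hy
        have hy0 : y ≠ 0 := by intro h; rw [h] at hy; linarith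
        have hy1 : y + 1 ≠ 0 := by intro h; nlinarith
        have h2 : HasDerivAt (fun y : ℝ => y + 1) 1 y := by
          simpa using (hasDerivAt_id y).add_const 1
        have hinv : HasDerivAt (fun y : ℝ => (y+1)⁻¹) (-1/(y+1)^2) y := by
          exact h2.inv hy1
        have hder : HasDerivAt (fun y : ℝ => Real.log y - 2 + 4*(y+1)⁻¹)
            (y⁻¹ + 4 * (-1/(y+1)^2)) y :=
          ((Real.hasDerivAt_log hy0).sub_const 2).add (hinv.const_mul 4)
        rw [hder.deriv]
        have hyp : (0:ℝ) < y := by linarith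
        have heq : y⁻¹ + 4 * (-1/(y+1)^2) = ((y-1)^2)/(y*(y+1)^2) := by
          field_simp; ring
        rw [heq]
        positivity
    intro y hy
    have h0 := hmono (Set.mem_Ici.mpr le_rfl) hy hy
    simp only [Real.log_one] at h0
    norm_num at h0
    linarith
  have h := key x hx
  have hx1 : (0:ℝ) < x + 1 := by linarith
  have heq : 2*(x-1)/(x+1) = 2 - 4*(x+1)⁻¹ := by field_simp; ring
  rw [heq]; linarith

lemma exp_rat_le (p q : ℕ) (hq : 0 < q) (c : ℝ) (hc : 0 ≤ c)
    (h : (2.7182818286:ℝ)^p ≤ c^q) : Real.exp ((p:ℝ)/q) ≤ c := by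
  have hq' : (q:ℝ) ≠ 0 := Nat.cast_ne_zero.mpr hq.ne'
  have e1 : Real.exp ((p:ℝ)/q) ^ q = Real.exp p := by
    rw [← Real.exp_nat_mul]; congr 1; field_simp
  have e2 : Real.exp (p:ℝ) ≤ (2.7182818286:ℝ)^p := by
    rw [← Real.exp_one_pow]
    exact pow_le_pow_left₀ (Real.exp_nonneg 1) Real.exp_one_lt_d9.le p
  have : Real.exp ((p:ℝ)/q) ^ q ≤ c^q := by rw [e1]; exact e2.trans h
  exact le_of_pow_le_pow_left₀ hq.ne' hc this

lemma exp_le_inv_one_sub {x : ℝ} (h1 : x < 1) : Real.exp x ≤ (1-x)⁻¹ := by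
  have h2 : 1 - x ≤ Real.exp (-x) := by linarith [Real.add_one_le_exp (-x)]
  have h3 : 0 < 1 - x := by linarith
  rw [Real.exp_neg] at h2
  calc Real.exp x = ((Real.exp x)⁻¹)⁻¹ := by rw [inv_inv]
    _ ≤ (1-x)⁻¹ := by
        exact inv_anti₀ h3 h2

lemma exp_two_le : Real.exp 2 ≤ 7.39 := by
  have := exp_rat_le 2 1 (by norm_num) 7.39 (by norm_num) (by norm_num)
  simpa using this

lemma exp_three_le : Real.exp 3 ≤ 20.09 := by
  have := exp_rat_le 3 1 (by norm_num) 20.09 (by norm_num) (by norm_num)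
  simpa using this

lemma exp_four_le : Real.exp 4 ≤ 54.6 := by
  have := exp_rat_le 4 1 (by norm_num) 54.6 (by norm_num) (by norm_num)
  simpa using this

lemma exp_3half_le : Real.exp (3/2) ≤ 4.49 := by
  have := exp_rat_le 3 2 (by norm_num) 4.49 (by norm_num) (by norm_num)
  simpa using this

lemma caseA (n k : ℕ) (hn : 4 ≤ n) (hk : 1 ≤ k) (t : ℝ) (hk2 : ((k:ℝ))^2 ≤ t)
    (hA : 2*t ≤ ((n:ℝ)-2)*(k:ℝ)^2) :
    ((k:ℝ)^(n-1) * Real.exp (2*t/(k:ℝ)^2))^2 ≤ 169 * t^n := by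
  have hk0 : (0:ℝ) < (k:ℝ) := by exact_mod_cast hk
  have hk20 : (0:ℝ) < (k:ℝ)^2 := by positivity
  set x := t/(k:ℝ)^2 with hxdef
  have hx1 : 1 ≤ x := (one_le_div hk20).mpr hk2
  have hx0 : 0 < x := by linarith
  have h2x : 2*x + 2 ≤ (n:ℝ) := by
    have : 2*x ≤ (n:ℝ)-2 := by
      rw [hxdef, ← mul_div_assoc, div_le_iff₀ hk20]
      linarith [hA]
    linarith
  have hlog : 2*(x-1)/(x+1) ≤ Real.log x := log_ge_artanh hx1
  have hlog0 : 0 ≤ Real.log x := Real.log_nonneg hx1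
  -- exp(4x) ≤ exp 4 * x^n
  have hexp : Real.exp (4*x) ≤ Real.exp 4 * x^n := by
    have h1 : 4*x - 4 ≤ (n:ℝ) * Real.log x := by
      have h2 : (2*x+2) * (2*(x-1)/(x+1)) = 4*(x-1) := by
        field_simp; ring
      have h3 : (2*x+2) * (2*(x-1)/(x+1)) ≤ (n:ℝ) * Real.log x := by
        apply mul_le_mul h2x hlog (div_nonneg (by linarith) (by linarith)) (by positivity)
      linarith [h2 ▸ h3]
    calc Real.exp (4*x) = Real.exp 4 * Real.exp (4*x-4) := by
          rw [← Real.exp_add]; ring_nf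
      _ ≤ Real.exp 4 * Real.exp ((n:ℝ) * Real.log x) := by
          apply mul_le_mul_of_nonneg_left (Real.exp_le_exp.mpr h1) (Real.exp_nonneg 4)
      _ = Real.exp 4 * x^n := by
          rw [Real.exp_nat_mul, Real.exp_log hx0]
  have hLHS : ((k:ℝ)^(n-1) * Real.exp (2*t/(k:ℝ)^2))^2
      = (k:ℝ)^(2*(n-1)) * Real.exp (4*x) := by
    rw [mul_pow, ← pow_mul, mul_comm (n-1) 2]
    congr 1
    rw [← Real.exp_nat_mul]
    congr 1
    rw [hxdef]; push_cast; ring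
  rw [hLHS]
  have hxn : (0:ℝ) ≤ x^n := by positivity
  have htx : t^n = x^n * ((k:ℝ)^2)^n := by
    rw [hxdef, div_pow, div_mul_cancel₀]
    positivity
  calc (k:ℝ)^(2*(n-1)) * Real.exp (4*x) ≤ (k:ℝ)^(2*(n-1)) * (169 * x^n) := by
        apply mul_le_mul_of_nonneg_left _ (by positivity)
        calc Real.exp (4*x) ≤ Real.exp 4 * x^n := hexp
          _ ≤ 169 * x^n := by nlinarith [exp_four_le, hxn]
    _ ≤ ((k:ℝ)^2)^n * (169 * x^n) := by
        apply mul_le_mul_of_nonneg_right _ (by positivity)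
        rw [← pow_mul]
        apply pow_le_pow_right₀ (by exact_mod_cast hk)
        omega
    _ = 169 * t^n := by rw [htx]; ring

lemma caseB1 (n L : ℕ) (hn : 4 ≤ n) (hL : 1 ≤ L) (t t₀ : ℝ) (h0 : 0 < t₀) (ht₀ : t₀ ≤ t)
    (htL : t ≤ ((L:ℝ))^2)
    (leaf : ((L:ℝ))^(2*(n-1)) * Real.exp (4*t₀/(L:ℝ)^2) ≤ 169 * t₀^n) :
    ((L:ℝ)^(n-1) * Real.exp (2*t/(L:ℝ)^2))^2 ≤ 169 * t^n := by
  have hL0 : (0:ℝ) < (L:ℝ) := by exact_mod_cast hL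
  have hL2 : (0:ℝ) < (L:ℝ)^2 := by positivity
  have ht : 0 < t := lt_of_lt_of_le h0 ht₀
  -- monotone step
  have hmono : Real.exp (4*(t-t₀)/(L:ℝ)^2) ≤ (t/t₀)^n := by
    have h1 : Real.exp (1 - t₀/t) ≤ t/t₀ := by
      have h2 : t₀/t ≤ Real.exp (t₀/t - 1) := by linarith [Real.add_one_le_exp (t₀/t - 1)]
      have h3 : 0 < t₀/t := by positivity
      calc Real.exp (1 - t₀/t) = (Real.exp (t₀/t - 1))⁻¹ := by
            rw [← Real.exp_neg]; ring_nf
        _ ≤ (t₀/t)⁻¹ := inv_anti₀ h3 h2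
        _ = t/t₀ := by rw [inv_div]
    have h4 : Real.exp ((n:ℝ) * (1 - t₀/t)) ≤ (t/t₀)^n := by
      rw [Real.exp_nat_mul]
      exact pow_le_pow_left₀ (Real.exp_nonneg _) h1 n
    apply le_trans _ h4
    apply Real.exp_le_exp.mpr
    have h5 : 4*(t-t₀)/(L:ℝ)^2 ≤ (n:ℝ)*(t-t₀)/t := by
      rw [div_le_div_iff₀ hL2 ht]
      have hn4 : (4:ℝ) ≤ (n:ℝ) := by exact_mod_cast hn
      have hst : 0 ≤ t - t₀ := sub_nonneg.mpr ht₀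
      calc 4*(t-t₀)*t ≤ 4*(t-t₀)*(L:ℝ)^2 := by nlinarith
        _ ≤ (n:ℝ)*(t-t₀)*(L:ℝ)^2 := by
            nlinarith [mul_nonneg (mul_nonneg (by linarith : (0:ℝ) ≤ (n:ℝ)-4) hst) hL2.le]
    have h6 : (n:ℝ)*(t-t₀)/t = (n:ℝ)*(1-t₀/t) := by field_simp
    exact h5.trans (le_of_eq h6)
  have hLHS : ((L:ℝ)^(n-1) * Real.exp (2*t/(L:ℝ)^2))^2
      = ((L:ℝ)^(2*(n-1)) * Real.exp (4*t₀/(L:ℝ)^2)) * Real.exp (4*(t-t₀)/(L:ℝ)^2) := by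
    rw [mul_pow, ← pow_mul, mul_comm (n-1) 2, mul_assoc, ← Real.exp_add, ← Real.exp_nat_mul]
    congr 2
    push_cast
    field_simp
    ring
  rw [hLHS]
  have hpos : (0:ℝ) ≤ (L:ℝ)^(2*(n-1)) * Real.exp (4*t₀/(L:ℝ)^2) := by positivity
  calc ((L:ℝ)^(2*(n-1)) * Real.exp (4*t₀/(L:ℝ)^2)) * Real.exp (4*(t-t₀)/(L:ℝ)^2)
      ≤ (169 * t₀^n) * (t/t₀)^n := by
        apply mul_le_mul leaf hmono (Real.exp_nonneg _) (by positivity)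
    _ = 169 * t^n := by
        rw [div_pow, mul_assoc, mul_div_cancel₀]
        positivity

lemma caseB0 (t : ℝ) (h1 : 1 ≤ t) (h2 : t ≤ 36/25) :
    (Real.exp (2*t))^2 ≤ 169 * t^4 := by
  have ht0 : 0 < t := by linarith
  have hid : 2*t = 2 + 4*(t-1)/(t+1) + 2*(t-1)^2/(t+1) := by
    field_simp; ring
  have hx : Real.exp (4*(t-1)/(t+1)) ≤ t^2 := by
    have := log_ge_artanh h1
    have h3 : 4*(t-1)/(t+1) ≤ 2*Real.log t := by
      have : 4*(t-1)/(t+1) = 2*(2*(t-1)/(t+1)) := by ring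
      rw [this]; linarith [log_ge_artanh h1]
    calc Real.exp (4*(t-1)/(t+1)) ≤ Real.exp (2*Real.log t) := Real.exp_le_exp.mpr h3
      _ = t^2 := by rw [show (2:ℝ)*Real.log t = (2:ℕ)*Real.log t by norm_num,
            Real.exp_nat_mul, Real.exp_log ht0]
  have hu : 2*(t-1)^2/(t+1) ≤ 121/625 := by
    rw [div_le_iff₀ (by linarith)]
    nlinarith
  have hu0 : 0 ≤ 2*(t-1)^2/(t+1) := by positivity
  have hexpu : Real.exp (2*(t-1)^2/(t+1)) ≤ 625/504 := by
    calc Real.exp (2*(t-1)^2/(t+1)) ≤ Real.exp (121/625) := Real.exp_le_exp.mpr hu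
      _ ≤ (1 - 121/625)⁻¹ := exp_le_inv_one_sub (by norm_num)
      _ = 625/504 := by norm_num
  have hmain : Real.exp (2*t) ≤ 13 * t^2 := by
    rw [hid, Real.exp_add, Real.exp_add]
    calc Real.exp 2 * Real.exp (4*(t-1)/(t+1)) * Real.exp (2*(t-1)^2/(t+1))
        ≤ 7.39 * t^2 * (625/504) := by
          apply mul_le_mul _ hexpu (Real.exp_nonneg _) (by positivity)
          apply mul_le_mul exp_two_le hx (Real.exp_nonneg _) (by norm_num)
      _ ≤ 13 * t^2 := by nlinarith
  have h0 : 0 ≤ Real.exp (2*t) := Real.exp_nonneg _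
  nlinarith [hmain]

lemma leafwrap (n L : ℕ) (hn : 4 ≤ n) (hL : 1 ≤ L) (t t₀ : ℝ) (h0 : 0 < t₀)
    (ht₀ : t₀ ≤ t) (htL : t ≤ ((L:ℝ))^2) (c : ℝ)
    (hexp : Real.exp (4*t₀/(L:ℝ)^2) ≤ c)
    (hnum : ((L:ℝ))^(2*(n-1)) * c ≤ 169 * t₀^n) :
    ∃ L' : ℕ, 1 ≤ L' ∧ ((L':ℝ)^(n-1) * Real.exp (2*t/(L':ℝ)^2))^2 ≤ 169 * t^n := by
  refine ⟨L, hL, caseB1 n L hn hL t t₀ h0 ht₀ htL ?_⟩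
  calc ((L:ℝ))^(2*(n-1)) * Real.exp (4*t₀/(L:ℝ)^2) ≤ ((L:ℝ))^(2*(n-1)) * c :=
        mul_le_mul_of_nonneg_left hexp (by positivity)
    _ ≤ 169 * t₀^n := hnum

lemma key (n : ℕ) (hn : 4 ≤ n) (t : ℝ) (ht : 1 ≤ t) :
    ∃ L : ℕ, 1 ≤ L ∧ ((L:ℝ)^(n-1) * Real.exp (2*t/(L:ℝ)^2))^2 ≤ 169 * t^n := by
  have ht0 : (0:ℝ) < t := by linarith
  obtain ⟨k, hkdef⟩ : ∃ k, k = Nat.floor (Real.sqrt t) := ⟨_, rfl⟩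
  have hs1 : 1 ≤ Real.sqrt t := by
    rw [show (1:ℝ) = Real.sqrt 1 by simp]
    exact Real.sqrt_le_sqrt ht
  have hk1 : 1 ≤ k := hkdef ▸ Nat.le_floor (by exact_mod_cast hs1)
  have hkle : (k:ℝ) ≤ Real.sqrt t := hkdef ▸ Nat.floor_le (Real.sqrt_nonneg t)
  have hk2 : ((k:ℝ))^2 ≤ t := by
    calc ((k:ℝ))^2 ≤ (Real.sqrt t)^2 := pow_le_pow_left₀ (by positivity) hkle 2
      _ = t := Real.sq_sqrt ht0.le
  have hk3 : t < ((k:ℝ)+1)^2 := by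
    have h1 : Real.sqrt t < (k:ℝ)+1 := by
      rw [hkdef]; exact Nat.lt_floor_add_one (Real.sqrt t)
    nlinarith [Real.sq_sqrt ht0.le, Real.sqrt_nonneg t]
  by_cases hA : 2*t ≤ ((n:ℝ)-2)*(k:ℝ)^2
  · exact ⟨k, hk1, caseA n k hn hk1 t hk2 hA⟩
  push_neg at hA
  have hnk : ((n:ℝ)-2)*(k:ℝ)^2 < 2*((k:ℝ)+1)^2 := by nlinarith
  have hcast : ((k+1:ℕ):ℝ) = (k:ℝ)+1 := by push_cast; ring
  by_cases hn4 : n = 4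
  · subst hn4
    by_cases hk14 : k = 1
    · subst hk14
      by_cases htB : t ≤ 36/25
      · exact ⟨1, le_rfl, by simpa using caseB0 t ht htB⟩
      · push_neg at htB
        refine leafwrap 4 2 le_rfl (by norm_num) t (36/25) (by norm_num) htB.le
          (by norm_num at hk3 ⊢; linarith) 7.39 ?_ (by norm_num)
        rw [show (4*(36/25:ℝ)/((2:ℕ):ℝ)^2) = 36/25 by norm_num]
        exact (Real.exp_le_exp.mpr (by norm_num)).trans exp_two_le
    · have hk2' : 2 ≤ k := by omega
      have hkr : (2:ℝ) ≤ (k:ℝ) := by exact_mod_cast hk2'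
      have ht₀ : ((k:ℝ))^2 ≤ t := by
        norm_num at hA
        linarith
      refine ⟨k+1, by omega, caseB1 4 (k+1) le_rfl (by omega) t ((k:ℝ)^2) (by positivity)
        ht₀ (by rw [hcast]; linarith) ?_⟩
      rw [hcast]
      have harg : 4*((k:ℝ))^2/((k:ℝ)+1)^2 ≤ 4 := by
        rw [div_le_iff₀ (by positivity)]
        nlinarith
      have hexp : Real.exp (4*((k:ℝ))^2/((k:ℝ)+1)^2) ≤ 54.6 :=
        (Real.exp_le_exp.mpr harg).trans exp_four_le
      have hpow : ((k:ℝ)+1)^(2*(4-1)) ≤ ((3/2)*(k:ℝ))^6 := by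
        norm_num
        exact pow_le_pow_left₀ (by positivity) (by linarith) 6
      have h6 : (0:ℝ) ≤ (k:ℝ)^6 := by positivity
      have h4 : (4:ℝ) ≤ (k:ℝ)^2 := by nlinarith
      have h46 : (k:ℝ)^6 * 4 ≤ (k:ℝ)^6 * (k:ℝ)^2 := mul_le_mul_of_nonneg_left h4 h6
      calc ((k:ℝ)+1)^(2*(4-1)) * Real.exp (4*((k:ℝ))^2/((k:ℝ)+1)^2)
          ≤ ((3/2)*(k:ℝ))^6 * 54.6 :=
            mul_le_mul hpow hexp (Real.exp_nonneg _) (by positivity)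
        _ = (729/64*54.6) * (k:ℝ)^6 := by ring
        _ ≤ 169 * ((k:ℝ)^2)^4 := by
            rw [show ((k:ℝ)^2)^4 = (k:ℝ)^6 * (k:ℝ)^2 by ring]
            nlinarith [h46, h6]
  · have hn5 : 5 ≤ n := by omega
    have hnr : (5:ℝ) ≤ (n:ℝ) := by exact_mod_cast hn5
    have hkr : (1:ℝ) ≤ (k:ℝ) := by exact_mod_cast hk1
    have hk4 : k ≤ 4 := by
      by_contra hcon
      push_neg at hcon
      have h5 : (5:ℝ) ≤ (k:ℝ) := by exact_mod_cast hcon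
      nlinarith
    have hn9 : n ≤ 9 := by
      by_contra hcon
      push_neg at hcon
      have h10 : (10:ℝ) ≤ (n:ℝ) := by exact_mod_cast hcon
      nlinarith
    clear hkdef hkle hs1 hk2 hnr hkr
    interval_cases n <;> interval_cases k <;> norm_num at hA hk3 hnk <;> norm_num
    · -- (5,1) t₀ = 3/2, L = 2
      refine leafwrap 5 2 (by norm_num) (by norm_num) t (3/2) (by norm_num)
        (by linarith) (by norm_num; linarith) 4.49 ?_ (by norm_num)
      rw [show (4*(3/2:ℝ)/((2:ℕ):ℝ)^2) = 3/2 by norm_num]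
      exact exp_3half_le
    · -- (5,2) t₀ = 6, L = 3
      refine leafwrap 5 3 (by norm_num) (by norm_num) t 6 (by norm_num)
        (by linarith) (by norm_num; linarith) 20.09 ?_ (by norm_num)
      rw [show (4*(6:ℝ)/((3:ℕ):ℝ)^2) = 8/3 by norm_num]
      exact (Real.exp_le_exp.mpr (by norm_num)).trans exp_three_le
    · -- (5,3) t₀ = 27/2, L = 4
      refine leafwrap 5 4 (by norm_num) (by norm_num) t (27/2) (by norm_num)
        (by linarith) (by norm_num; linarith) 54.6 ?_ (by norm_num)
      rw [show (4*(27/2:ℝ)/((4:ℕ):ℝ)^2) = 27/8 by norm_num]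
      exact (Real.exp_le_exp.mpr (by norm_num)).trans exp_four_le
    · -- (5,4) t₀ = 24, L = 5
      refine leafwrap 5 5 (by norm_num) (by norm_num) t 24 (by norm_num)
        (by linarith) (by norm_num; linarith) 54.6 ?_ (by norm_num)
      rw [show (4*(24:ℝ)/((5:ℕ):ℝ)^2) = 96/25 by norm_num]
      exact (Real.exp_le_exp.mpr (by norm_num)).trans exp_four_le
    · -- (6,1) t₀ = 2, L = 2
      refine leafwrap 6 2 (by norm_num) (by norm_num) t 2 (by norm_num)
        (by linarith) (by norm_num; linarith) 7.39 ?_ (by norm_num)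
      rw [show (4*(2:ℝ)/((2:ℕ):ℝ)^2) = 2 by norm_num]
      exact exp_two_le
    · -- (6,2) t₀ = 8, L = 3
      refine leafwrap 6 3 (by norm_num) (by norm_num) t 8 (by norm_num)
        (by linarith) (by norm_num; linarith) 54.6 ?_ (by norm_num)
      rw [show (4*(8:ℝ)/((3:ℕ):ℝ)^2) = 32/9 by norm_num]
      exact (Real.exp_le_exp.mpr (by norm_num)).trans exp_four_le
    · -- (7,1) t₀ = 5/2, L = 2
      refine leafwrap 7 2 (by norm_num) (by norm_num) t (5/2) (by norm_num)
        (by linarith) (by norm_num; linarith) 20.09 ?_ (by norm_num)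
      rw [show (4*(5/2:ℝ)/((2:ℕ):ℝ)^2) = 5/2 by norm_num]
      exact (Real.exp_le_exp.mpr (by norm_num)).trans exp_three_le
    · -- (8,1) t₀ = 3, L = 2
      refine leafwrap 8 2 (by norm_num) (by norm_num) t 3 (by norm_num)
        (by linarith) (by norm_num; linarith) 20.09 ?_ (by norm_num)
      rw [show (4*(3:ℝ)/((2:ℕ):ℝ)^2) = 3 by norm_num]
      exact exp_three_le
    · -- (9,1) t₀ = 7/2, L = 2
      refine leafwrap 9 2 (by norm_num) (by norm_num) t (7/2) (by norm_num)
        (by linarith) (by norm_num; linarith) 54.6 ?_ (by norm_num)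
      rw [show (4*(7/2:ℝ)/((2:ℕ):ℝ)^2) = 7/2 by norm_num]
      exact (Real.exp_le_exp.mpr (by norm_num)).trans exp_four_le

end SG

namespace SG

variable {d : ℕ} {Sig : Matrix (Fin d) (Fin d) ℝ} {β : ℝ} {μ : Fin d → ℝ}

lemma quadForm_nonneg (hSig : Sig.PosDef) (v : Fin d → ℝ) : 0 ≤ quadForm Sig v := by
  have h := hSig.inv.posSemidef.re_dotProduct_nonneg v
  simpa [quadForm] using h

lemma quadForm_identity (Sig : Matrix (Fin d) (Fin d) ℝ) (a b : Fin d → ℝ) (θ : ℝ) :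
    quadForm Sig ((1-θ)•a + θ•b)
      = (1-θ)*quadForm Sig a + θ*quadForm Sig b - θ*(1-θ)*quadForm Sig (a-b) := by
  simp only [quadForm, Matrix.mulVec_add, Matrix.mulVec_smul, Matrix.mulVec_sub,
    dotProduct_add, dotProduct_smul, add_dotProduct,
    smul_dotProduct, dotProduct_sub, sub_dotProduct,
    smul_eq_mul]
  ring

lemma quadForm_convex_max (hSig : Sig.PosDef) (a b : Fin d → ℝ) (θ : ℝ)
    (h0 : 0 ≤ θ) (h1 : θ ≤ 1) :
    quadForm Sig ((1-θ)•a + θ•b) ≤ max (quadForm Sig a) (quadForm Sig b) := by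
  have hid := quadForm_identity Sig a b θ
  have hab := quadForm_nonneg hSig (a - b)
  have h2 : quadForm Sig ((1-θ)•a + θ•b) ≤ (1-θ)*quadForm Sig a + θ*quadForm Sig b := by
    nlinarith [mul_nonneg (mul_nonneg h0 (by linarith : (0:ℝ) ≤ 1-θ)) hab]
  have h3 : (1-θ)*quadForm Sig a + θ*quadForm Sig b
      ≤ max (quadForm Sig a) (quadForm Sig b) := by
    have ha := le_max_left (quadForm Sig a) (quadForm Sig b)
    have hb := le_max_right (quadForm Sig a) (quadForm Sig b)
    nlinarith
  linarith

lemma gaussDens_pos (hSig : Sig.PosDef) (hβ : 0 < β) (x : Fin d → ℝ) :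
    0 < gaussDens Sig β μ x := by
  have hdet : 0 < Sig.det := hSig.det_pos
  have h1 : 0 < (β / (2 * Real.pi)) ^ ((d : ℝ) / 2) :=
    Real.rpow_pos_of_pos (by have := Real.pi_pos; positivity) _
  have h2 : 0 < Real.sqrt Sig.det := Real.sqrt_pos.mpr hdet
  unfold gaussDens
  positivity

lemma gaussDens_le (hSig : Sig.PosDef) (hβ : 0 < β) (x : Fin d → ℝ) :
    gaussDens Sig β μ x ≤ (β / (2 * Real.pi)) ^ ((d : ℝ) / 2) / Real.sqrt Sig.det := by
  have h1 : 0 < (β / (2 * Real.pi)) ^ ((d : ℝ) / 2) :=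
    Real.rpow_pos_of_pos (by have := Real.pi_pos; positivity) _
  have h2 : 0 < Real.sqrt Sig.det := Real.sqrt_pos.mpr hSig.det_pos
  have h3 : Real.exp (-(β / 2) * quadForm Sig (x - μ)) ≤ 1 := by
    rw [Real.exp_le_one_iff]
    have := quadForm_nonneg hSig (x - μ)
    nlinarith
  calc gaussDens Sig β μ x
      ≤ (β / (2 * Real.pi)) ^ ((d : ℝ) / 2) / Real.sqrt Sig.det * 1 := by
        unfold gaussDens
        apply mul_le_mul_of_nonneg_left h3 (by positivity)
    _ = _ := mul_one _

lemma gaussDens_segment (hSig : Sig.PosDef) (hβ : 0 < β) (x y : Fin d → ℝ) (θ : ℝ)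
    (h0 : 0 ≤ θ) (h1 : θ ≤ 1) :
    min (gaussDens Sig β μ x) (gaussDens Sig β μ y)
      ≤ gaussDens Sig β μ ((1-θ)•x + θ•y) := by
  have hsub : ((1-θ)•x + θ•y) - μ = (1-θ)•(x-μ) + θ•(y-μ) := by
    ext i
    simp [Pi.smul_apply, smul_eq_mul]
    ring
  have hq : quadForm Sig (((1-θ)•x + θ•y) - μ)
      ≤ max (quadForm Sig (x-μ)) (quadForm Sig (y-μ)) := by
    rw [hsub]; exact quadForm_convex_max hSig _ _ θ h0 h1
  have hC : 0 < (β / (2 * Real.pi)) ^ ((d : ℝ) / 2) / Real.sqrt Sig.det := by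
    have h1' : 0 < (β / (2 * Real.pi)) ^ ((d : ℝ) / 2) :=
      Real.rpow_pos_of_pos (by have := Real.pi_pos; positivity) _
    have h2 : 0 < Real.sqrt Sig.det := Real.sqrt_pos.mpr hSig.det_pos
    positivity
  rcases le_total (quadForm Sig (x-μ)) (quadForm Sig (y-μ)) with hc | hc
  · have hmax : max (quadForm Sig (x-μ)) (quadForm Sig (y-μ)) = quadForm Sig (y-μ) :=
      max_eq_right hc
    rw [hmax] at hq
    calc min (gaussDens Sig β μ x) (gaussDens Sig β μ y) ≤ gaussDens Sig β μ y :=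
          min_le_right _ _
      _ ≤ gaussDens Sig β μ ((1-θ)•x + θ•y) := by
          unfold gaussDens
          apply mul_le_mul_of_nonneg_left _ hC.le
          apply Real.exp_le_exp.mpr
          nlinarith
  · have hmax : max (quadForm Sig (x-μ)) (quadForm Sig (y-μ)) = quadForm Sig (x-μ) :=
      max_eq_left hc
    rw [hmax] at hq
    calc min (gaussDens Sig β μ x) (gaussDens Sig β μ y) ≤ gaussDens Sig β μ x :=
          min_le_left _ _
      _ ≤ gaussDens Sig β μ ((1-θ)•x + θ•y) := by
          unfold gaussDens
          apply mul_le_mul_of_nonneg_left _ hC.le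
          apply Real.exp_le_exp.mpr
          nlinarith

end SG

-- appended to meas.lean after testing
namespace SG
variable {d : ℕ}

lemma euclNorm_eq (v : Fin d → ℝ) :
    euclNorm v = ‖(WithLp.equiv 2 (Fin d → ℝ)).symm v‖ := by
  rw [EuclideanSpace.norm_eq]
  unfold euclNorm
  congr 1
  apply Finset.sum_congr rfl
  intro k _
  show v k ^ 2 = ‖v k‖ ^ 2
  rw [Real.norm_eq_abs, sq_abs]

lemma euclNorm_nonneg (v : Fin d → ℝ) : 0 ≤ euclNorm v := Real.sqrt_nonneg _

lemma euclNorm_sq (v : Fin d → ℝ) : (euclNorm v)^2 = ∑ k, v k ^ 2 :=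
  Real.sq_sqrt (by positivity)

lemma euclNorm_add_le (x y : Fin d → ℝ) : euclNorm (x + y) ≤ euclNorm x + euclNorm y := by
  simp only [euclNorm_eq]
  rw [show (WithLp.equiv 2 (Fin d → ℝ)).symm (x + y)
      = (WithLp.equiv 2 (Fin d → ℝ)).symm x + (WithLp.equiv 2 (Fin d → ℝ)).symm y by
    simp [WithLp.toLp_add]]
  exact norm_add_le _ _

lemma euclNorm_smul (c : ℝ) (x : Fin d → ℝ) : euclNorm (c • x) = |c| * euclNorm x := by
  simp only [euclNorm_eq]
  rw [show (WithLp.equiv 2 (Fin d → ℝ)).symm (c • x)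
      = c • (WithLp.equiv 2 (Fin d → ℝ)).symm x by simp [WithLp.toLp_smul]]
  rw [norm_smul, Real.norm_eq_abs]

lemma ball_convex {R : ℝ} {x y : Fin d → ℝ} (θ : ℝ) (h0 : 0 ≤ θ) (h1 : θ ≤ 1)
    (hx : euclNorm x ≤ R) (hy : euclNorm y ≤ R) :
    euclNorm ((1-θ)•x + θ•y) ≤ R := by
  have h2 := euclNorm_add_le ((1-θ)•x) (θ•y)
  rw [euclNorm_smul, euclNorm_smul, abs_of_nonneg h0, abs_of_nonneg (by linarith : (0:ℝ) ≤ 1-θ)] at h2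
  have hx0 := euclNorm_nonneg x
  have hy0 := euclNorm_nonneg y
  nlinarith [h2]

lemma continuous_euclNorm : Continuous (euclNorm (d := d)) := by
  unfold euclNorm
  exact Real.continuous_sqrt.comp (continuous_finset_sum _ fun k _ => (continuous_apply k).pow 2)

lemma abs_le_euclNorm (v : Fin d → ℝ) (k : Fin d) : |v k| ≤ euclNorm v := by
  rw [show |v k| = Real.sqrt ((v k)^2) by rw [Real.sqrt_sq_eq_abs]]
  apply Real.sqrt_le_sqrt
  exact Finset.single_le_sum (f := fun j => v j ^ 2) (fun j _ => sq_nonneg _) (Finset.mem_univ k)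

lemma isCompact_ball (R : ℝ) (hR : 0 ≤ R) : IsCompact {x : Fin d → ℝ | euclNorm x ≤ R} := by
  apply Metric.isCompact_of_isClosed_isBounded
  · exact isClosed_le continuous_euclNorm continuous_const
  · apply Bornology.IsBounded.subset (Metric.isBounded_closedBall (x := (0 : Fin d → ℝ)) (r := R))
    intro x hx
    simp only [Set.mem_setOf_eq] at hx
    simp only [Metric.mem_closedBall, dist_zero_right]
    rw [pi_norm_le_iff_of_nonneg hR]
    intro i
    rw [Real.norm_eq_abs]
    exact (abs_le_euclNorm x i).trans hx

lemma measurableSet_ball (R : ℝ) : MeasurableSet {x : Fin d → ℝ | euclNorm x ≤ R} :=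
  (isClosed_le continuous_euclNorm continuous_const).measurableSet

lemma continuous_quadForm (Sig : Matrix (Fin d) (Fin d) ℝ) (μ : Fin d → ℝ) :
    Continuous fun x : Fin d → ℝ => quadForm Sig (x - μ) := by
  simp only [quadForm, dotProduct, Matrix.mulVec]
  apply continuous_finset_sum
  intro i _
  apply Continuous.mul
  · exact (continuous_apply i).sub continuous_const
  · apply continuous_finset_sum
    intro j _
    exact continuous_const.mul ((continuous_apply j).sub continuous_const)

lemma continuous_gaussDens (Sig : Matrix (Fin d) (Fin d) ℝ) (β : ℝ) (μ : Fin d → ℝ) :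
    Continuous (gaussDens Sig β μ) := by
  unfold gaussDens
  exact continuous_const.mul (Real.continuous_exp.comp
    (continuous_const.mul (continuous_quadForm Sig μ)))

lemma exists_gauss_min {Sig : Matrix (Fin d) (Fin d) ℝ} {β : ℝ} {μ : Fin d → ℝ}
    (hSig : Sig.PosDef) (hβ : 0 < β) (R : ℝ) (hR : 0 < R) :
    ∃ ε : ℝ, 0 < ε ∧ ∀ x ∈ {x : Fin d → ℝ | euclNorm x ≤ R}, ε ≤ gaussDens Sig β μ x := by
  have hne : {x : Fin d → ℝ | euclNorm x ≤ R}.Nonempty := by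
    refine ⟨0, ?_⟩
    simp only [Set.mem_setOf_eq]
    unfold euclNorm
    simp [Real.sqrt_eq_zero']
    exact hR.le
  obtain ⟨x₀, hx₀, hmin⟩ := (isCompact_ball R hR.le).exists_isMinOn hne
    ((continuous_gaussDens Sig β μ).continuousOn)
  exact ⟨gaussDens Sig β μ x₀, gaussDens_pos hSig hβ x₀, fun x hx => hmin hx⟩

end SG

namespace SG
open MeasureTheory ENNReal
variable {d : ℕ}

lemma lint_scale (c : ℝ) (hc : 0 < c) (f : (Fin d → ℝ) → ℝ≥0∞) (hf : Measurable f) :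
    ∫⁻ v, f (c • v) = ENNReal.ofReal ((c^d)⁻¹) * ∫⁻ y, f y := by
  set Lm : (Fin d → ℝ) →ₗ[ℝ] (Fin d → ℝ) := c • LinearMap.id with hLm
  have hdet : LinearMap.det Lm = c^d := by
    rw [hLm, LinearMap.det_smul, LinearMap.det_id, mul_one, Module.finrank_pi,
      Fintype.card_fin]
  have hdet0 : LinearMap.det Lm ≠ 0 := by rw [hdet]; positivity
  have hmap := Real.map_linearMap_volume_pi_eq_smul_volume_pi hdet0
  have hLmeas : Measurable (⇑Lm) := Lm.continuous_of_finiteDimensional.measurable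
  have h1 : ∀ v, Lm v = c • v := fun v => rfl
  calc ∫⁻ v, f (c • v) = ∫⁻ v, f (Lm v) := by simp_rw [h1]
    _ = ∫⁻ y, f y ∂(Measure.map (⇑Lm) volume) := (lintegral_map hf hLmeas).symm
    _ = ∫⁻ y, f y ∂(ENNReal.ofReal |(LinearMap.det Lm)⁻¹| • volume) := by rw [hmap]
    _ = ENNReal.ofReal ((c^d)⁻¹) * ∫⁻ y, f y := by
        rw [lintegral_smul_measure, hdet, abs_of_nonneg (by positivity), smul_eq_mul]

lemma lint_affine (x0 : Fin d → ℝ) (c : ℝ) (hc : 0 < c) (f : (Fin d → ℝ) → ℝ≥0∞)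
    (hf : Measurable f) :
    ∫⁻ y, f y = ENNReal.ofReal (c^d) * ∫⁻ v, f (x0 + c • v) := by
  have h1 : ∫⁻ v, f (x0 + c • v) = ENNReal.ofReal ((c^d)⁻¹) * ∫⁻ w, f (x0 + w) :=
    lint_scale c hc (fun w => f (x0 + w)) (hf.comp (measurable_const_add x0))
  have h2 : ∫⁻ w, f (x0 + w) = ∫⁻ y, f y := by
    simp_rw [add_comm x0]
    exact lintegral_add_right_eq_self f x0
  rw [h1, h2, ← mul_assoc, ← ENNReal.ofReal_mul (by positivity),
    mul_inv_cancel₀ (by positivity : (c:ℝ)^d ≠ 0), ENNReal.ofReal_one, one_mul]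

lemma telescope_sq (f : ℕ → ℝ) (L : ℕ) :
    (f 0 - f L)^2 ≤ (L:ℝ) * ∑ j ∈ Finset.range L, (f j - f (j+1))^2 := by
  have h1 : f 0 - f L = ∑ j ∈ Finset.range L, (f j - f (j+1)) := (Finset.sum_range_sub' f L).symm
  rw [h1]
  have h2 := sq_sum_le_card_mul_sum_sq (s := Finset.range L) (f := fun j => f j - f (j+1))
  simpa using h2

lemma measurable_propDens (η : ℝ) :
    Measurable (Function.uncurry (propDens d η)) := by
  unfold propDens Function.uncurry
  apply Measurable.mul measurable_const
  apply Real.measurable_exp.comp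
  apply Measurable.div_const
  apply Measurable.neg
  apply Finset.measurable_sum
  intro k _
  exact (((measurable_pi_apply k).comp measurable_snd).sub
    ((measurable_pi_apply k).comp measurable_fst)).pow_const 2

end SG

namespace SG
open MeasureTheory ENNReal
variable {d : ℕ}

set_option maxHeartbeats 2000000 in
lemma core (Bs : Set (Fin d → ℝ)) (hB : MeasurableSet Bs)
    (p : (Fin d → ℝ) → ℝ) (hp : Measurable p) (hpnn : ∀ x, 0 ≤ p x)
    (g : (Fin d → ℝ) → ℝ) (hg : Measurable g)
    (η R Mv qmin : ℝ) (hMv : 0 ≤ Mv) (hqmin : 0 < qmin)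
    (L : ℕ) (hL : 1 ≤ L)
    (hmem : ∀ (x v : Fin d → ℝ) (j : ℕ), j ≤ L → x ∈ Bs → x + (L:ℝ)•v ∈ Bs →
      x + (j:ℝ)•v ∈ Bs)
    (hpp : ∀ (x v : Fin d → ℝ) (j : ℕ), j + 1 ≤ L → x ∈ Bs → x + (L:ℝ)•v ∈ Bs →
      p x * p (x + (L:ℝ)•v) ≤ Mv * min (p (x + (j:ℝ)•v)) (p (x + ((j:ℝ)+1)•v)))
    (hdist : ∀ x v : Fin d → ℝ, x ∈ Bs → x + (L:ℝ)•v ∈ Bs → euclNorm v ≤ 2*R/(L:ℝ))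
    (hq : ∀ u v : Fin d → ℝ, euclNorm v ≤ 2*R/(L:ℝ) → qmin ≤ propDens d η u (u + v)) :
    ∫⁻ x, ∫⁻ y, (Bs.indicator (fun _ => (1:ℝ≥0∞)) x) * (Bs.indicator (fun _ => (1:ℝ≥0∞)) y)
        * ENNReal.ofReal ((g x - g y)^2 * (p x * p y))
      ≤ (L:ℝ≥0∞)^(d+2) * ENNReal.ofReal Mv * (ENNReal.ofReal qmin)⁻¹ *
        ∫⁻ x, ∫⁻ y, (Bs.indicator (fun _ => (1:ℝ≥0∞)) x) * (Bs.indicator (fun _ => (1:ℝ≥0∞)) y)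
          * ENNReal.ofReal ((g x - g y)^2 * (propDens d η x y * min (p x) (p y))) := by
  have hLrpos : (0:ℝ) < (L:ℝ) := by exact_mod_cast hL
  set χ : (Fin d → ℝ) → ℝ≥0∞ := Bs.indicator (fun _ => (1:ℝ≥0∞)) with hχ
  have hχmeas : Measurable χ := measurable_const.indicator hB
  set S2R : Set (Fin d → ℝ) := {v : Fin d → ℝ | euclNorm v ≤ 2*R/(L:ℝ)} with hS2R
  have hS2Rmeas : MeasurableSet S2R := measurableSet_ball _
  set ι : (Fin d → ℝ) → ℝ≥0∞ := S2R.indicator (fun _ => (1:ℝ≥0∞)) with hι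
  have hιmeas : Measurable ι := measurable_const.indicator hS2Rmeas
  -- function families
  set A : (Fin d → ℝ) → (Fin d → ℝ) → ℝ≥0∞ :=
    fun x y => χ x * χ y * ENNReal.ofReal ((g x - g y)^2 * (p x * p y)) with hA
  set DD : (Fin d → ℝ) → (Fin d → ℝ) → ℝ≥0∞ :=
    fun x y => χ x * χ y * ENNReal.ofReal ((g x - g y)^2 * (propDens d η x y * min (p x) (p y)))
    with hDD
  set G : ℕ → (Fin d → ℝ) → (Fin d → ℝ) → ℝ≥0∞ :=
    fun j x v => ENNReal.ofReal ((g (x + (j:ℝ)•v) - g (x + ((j:ℝ)+1)•v))^2)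
      * (χ x * χ (x + (L:ℝ)•v) * ENNReal.ofReal (p x * p (x + (L:ℝ)•v))) with hG
  set K : (Fin d → ℝ) → (Fin d → ℝ) → ℝ≥0∞ :=
    fun u v => ENNReal.ofReal ((g u - g (u+v))^2)
      * (χ u * χ (u+v) * ι v * ENNReal.ofReal (min (p u) (p (u+v)))) with hK
  -- measurability helpers
  have haff : ∀ c : ℝ, Measurable fun w : (Fin d → ℝ) × (Fin d → ℝ) => w.1 + c • w.2 :=
    fun c => measurable_fst.add (measurable_snd.const_smul c)
  have hsum : Measurable fun w : (Fin d → ℝ) × (Fin d → ℝ) => w.1 + w.2 :=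
    measurable_fst.add measurable_snd
  have hAu : Measurable (Function.uncurry fun x v => A x (x + (L:ℝ)•v)) := by
    apply Measurable.mul
    · exact ((hχmeas.comp measurable_fst).mul (hχmeas.comp (haff L)))
    · exact ENNReal.measurable_ofReal.comp
        ((((hg.comp measurable_fst).sub (hg.comp (haff L))).pow_const 2).mul
          ((hp.comp measurable_fst).mul (hp.comp (haff L))))
  have hGu : ∀ j : ℕ, Measurable (Function.uncurry (G j)) := by
    intro j
    apply Measurable.mul
    · exact ENNReal.measurable_ofReal.comp
        (((hg.comp (haff (j:ℝ))).sub (hg.comp (haff ((j:ℝ)+1)))).pow_const 2)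
    · exact ((hχmeas.comp measurable_fst).mul (hχmeas.comp (haff L))).mul
        (ENNReal.measurable_ofReal.comp ((hp.comp measurable_fst).mul (hp.comp (haff L))))
  have hKu : Measurable (Function.uncurry K) := by
    apply Measurable.mul
    · exact ENNReal.measurable_ofReal.comp
        (((hg.comp measurable_fst).sub (hg.comp hsum)).pow_const 2)
    · exact (((hχmeas.comp measurable_fst).mul (hχmeas.comp hsum)).mul
        (hιmeas.comp measurable_snd)).mul
        (ENNReal.measurable_ofReal.comp ((hp.comp measurable_fst).min (hp.comp hsum)))
  have hDDu : Measurable (Function.uncurry DD) := by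
    apply Measurable.mul
    · exact (hχmeas.comp measurable_fst).mul (hχmeas.comp measurable_snd)
    · exact ENNReal.measurable_ofReal.comp
        ((((hg.comp measurable_fst).sub (hg.comp measurable_snd)).pow_const 2).mul
          ((measurable_propDens η).mul
            ((hp.comp measurable_fst).min (hp.comp measurable_snd))))
  have hAy : ∀ x, Measurable (A x) := fun x =>
    (measurable_const.mul hχmeas).mul (ENNReal.measurable_ofReal.comp
      (((measurable_const.sub hg).pow_const 2).mul (measurable_const.mul hp)))
  -- Step 1 : change of variables y = x + L v
  have step1 : ∫⁻ x, ∫⁻ y, A x y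
      = ENNReal.ofReal ((L:ℝ)^d) * ∫⁻ x, ∫⁻ v, A x (x + (L:ℝ)•v) := by
    have h1 : ∀ x, ∫⁻ y, A x y = ENNReal.ofReal ((L:ℝ)^d) * ∫⁻ v, A x (x + (L:ℝ)•v) :=
      fun x => lint_affine x (L:ℝ) hLrpos (A x) (hAy x)
    simp_rw [h1]
    exact lintegral_const_mul _ (Measurable.lintegral_prod_right hAu)
  -- Step 2 : telescoping + Cauchy-Schwarz, pointwise
  have step2 : ∀ x v, A x (x + (L:ℝ)•v) ≤ (L:ℝ≥0∞) * ∑ j ∈ Finset.range L, G j x v := by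
    intro x v
    have htel : (g x - g (x + (L:ℝ)•v))^2
        ≤ (L:ℝ) * ∑ j ∈ Finset.range L, (g (x + (j:ℝ)•v) - g (x + ((j:ℝ)+1)•v))^2 := by
      have h2 := telescope_sq (fun j : ℕ => g (x + (j:ℝ)•v)) L
      simp only [Nat.cast_zero, zero_smul, add_zero, Nat.cast_add, Nat.cast_one] at h2
      exact h2
    have hw0 : (0:ℝ) ≤ p x * p (x + (L:ℝ)•v) := mul_nonneg (hpnn _) (hpnn _)
    have h3 : ENNReal.ofReal ((g x - g (x + (L:ℝ)•v))^2 * (p x * p (x + (L:ℝ)•v)))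
        ≤ ENNReal.ofReal (((L:ℝ) * ∑ j ∈ Finset.range L,
            (g (x + (j:ℝ)•v) - g (x + ((j:ℝ)+1)•v))^2) * (p x * p (x + (L:ℝ)•v))) :=
      ENNReal.ofReal_le_ofReal (mul_le_mul_of_nonneg_right htel hw0)
    have h4 : ENNReal.ofReal (((L:ℝ) * ∑ j ∈ Finset.range L,
            (g (x + (j:ℝ)•v) - g (x + ((j:ℝ)+1)•v))^2) * (p x * p (x + (L:ℝ)•v)))
        = (L:ℝ≥0∞) * ∑ j ∈ Finset.range L,
            ENNReal.ofReal ((g (x + (j:ℝ)•v) - g (x + ((j:ℝ)+1)•v))^2)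
              * ENNReal.ofReal (p x * p (x + (L:ℝ)•v)) := by
      rw [mul_assoc, ENNReal.ofReal_mul (by positivity), Finset.sum_mul,
        ENNReal.ofReal_sum_of_nonneg (fun j _ => mul_nonneg (sq_nonneg _) hw0),
        ENNReal.ofReal_natCast]
      congr 1
      exact Finset.sum_congr rfl fun j _ => ENNReal.ofReal_mul (sq_nonneg _)
    calc A x (x + (L:ℝ)•v)
        = χ x * χ (x + (L:ℝ)•v)
            * ENNReal.ofReal ((g x - g (x + (L:ℝ)•v))^2 * (p x * p (x + (L:ℝ)•v))) := by
          rw [hA]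
      _ ≤ χ x * χ (x + (L:ℝ)•v) * ((L:ℝ≥0∞) * ∑ j ∈ Finset.range L,
            ENNReal.ofReal ((g (x + (j:ℝ)•v) - g (x + ((j:ℝ)+1)•v))^2)
              * ENNReal.ofReal (p x * p (x + (L:ℝ)•v))) :=
          mul_le_mul_right (h3.trans_eq h4) _
      _ = (L:ℝ≥0∞) * ∑ j ∈ Finset.range L, G j x v := by
          simp only [hG, Finset.mul_sum]
          exact Finset.sum_congr rfl fun j _ => by ring
  -- Step 3 : integrate step2
  have hGx : ∀ (j:ℕ) x, Measurable (G j x) := fun j x => (hGu j).of_uncurry_left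
  have hGint : ∀ j : ℕ, Measurable fun x => ∫⁻ v, G j x v :=
    fun j => (hGu j).lintegral_prod_right
  have step3 : ∫⁻ x, ∫⁻ v, A x (x + (L:ℝ)•v)
      ≤ (L:ℝ≥0∞) * ∑ j ∈ Finset.range L, ∫⁻ x, ∫⁻ v, G j x v := by
    calc ∫⁻ x, ∫⁻ v, A x (x + (L:ℝ)•v)
        ≤ ∫⁻ x, ∫⁻ v, (L:ℝ≥0∞) * ∑ j ∈ Finset.range L, G j x v :=
          lintegral_mono fun x => lintegral_mono fun v => step2 x v
      _ = (L:ℝ≥0∞) * ∑ j ∈ Finset.range L, ∫⁻ x, ∫⁻ v, G j x v := by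
          have e1 : ∀ x, ∫⁻ v, (L:ℝ≥0∞) * ∑ j ∈ Finset.range L, G j x v
              = (L:ℝ≥0∞) * ∑ j ∈ Finset.range L, ∫⁻ v, G j x v := by
            intro x
            rw [lintegral_const_mul _ (Finset.measurable_sum _ fun j _ => hGx j x),
              lintegral_finset_sum _ fun j _ => hGx j x]
          simp_rw [e1]
          rw [lintegral_const_mul _ (Finset.measurable_sum _ fun j _ => hGint j),
            lintegral_finset_sum _ fun j _ => hGint j]
  -- Step 4 : weight bound pointwise
  have hplus : ∀ (x v : Fin d → ℝ) (j : ℕ), (x + (j:ℝ)•v) + v = x + ((j:ℝ)+1)•v := by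
    intro x v j
    rw [add_smul, one_smul, add_assoc]
  have step4 : ∀ (j:ℕ), j+1 ≤ L → ∀ x v,
      G j x v ≤ ENNReal.ofReal Mv * K (x + (j:ℝ)•v) v := by
    intro j hj x v
    by_cases hx1 : x ∈ Bs
    · by_cases hx2 : x + (L:ℝ)•v ∈ Bs
      · have hz1 : x + (j:ℝ)•v ∈ Bs := hmem x v j (by omega) hx1 hx2
        have hz2 : x + ((j:ℝ)+1)•v ∈ Bs := by
          have h5 := hmem x v (j+1) hj hx1 hx2
          rwa [Nat.cast_add, Nat.cast_one] at h5
        have hd : v ∈ S2R := hdist x v hx1 hx2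
        have hppx := hpp x v j hj hx1 hx2
        have hof : ENNReal.ofReal (p x * p (x + (L:ℝ)•v))
            ≤ ENNReal.ofReal Mv
              * ENNReal.ofReal (min (p (x + (j:ℝ)•v)) (p (x + ((j:ℝ)+1)•v))) := by
          rw [← ENNReal.ofReal_mul hMv]
          exact ENNReal.ofReal_le_ofReal hppx
        simp only [hG, hK, hplus x v j, hχ, hι, Set.indicator_of_mem hx1,
          Set.indicator_of_mem hx2, Set.indicator_of_mem hz1, Set.indicator_of_mem hz2,
          Set.indicator_of_mem hd]
        calc ENNReal.ofReal ((g (x + (j:ℝ)•v) - g (x + ((j:ℝ)+1)•v))^2)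
              * ((1:ℝ≥0∞) * 1 * ENNReal.ofReal (p x * p (x + (L:ℝ)•v)))
            ≤ ENNReal.ofReal ((g (x + (j:ℝ)•v) - g (x + ((j:ℝ)+1)•v))^2)
              * ((1:ℝ≥0∞) * 1 * (ENNReal.ofReal Mv
                * ENNReal.ofReal (min (p (x + (j:ℝ)•v)) (p (x + ((j:ℝ)+1)•v))))) :=
              mul_le_mul_right (mul_le_mul_right hof _) _
          _ = ENNReal.ofReal Mv * (ENNReal.ofReal ((g (x + (j:ℝ)•v) - g (x + ((j:ℝ)+1)•v))^2)
              * ((1:ℝ≥0∞) * 1 * 1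
                * ENNReal.ofReal (min (p (x + (j:ℝ)•v)) (p (x + ((j:ℝ)+1)•v))))) := by
              ring
      · simp only [hG, hχ, Set.indicator_of_notMem hx2]
        simp
    · simp only [hG, hχ, Set.indicator_of_notMem hx1]
      simp
  -- Step 5 : shift x
  have hKj : ∀ j : ℕ, Measurable (Function.uncurry fun x v => K (x + (j:ℝ)•v) v) :=
    fun j => hKu.comp ((haff (j:ℝ)).prodMk measurable_snd)
  have step5 : ∀ j : ℕ, ∫⁻ x, ∫⁻ v, K (x + (j:ℝ)•v) v = ∫⁻ v, ∫⁻ u, K u v := by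
    intro j
    rw [lintegral_lintegral_swap (hKj j).aemeasurable]
    apply lintegral_congr
    intro v
    exact lintegral_add_right_eq_self (fun u => K u v) ((j:ℝ)•v)
  -- Step 6 : proposal lower bound pointwise
  have step6 : ∀ u v, K u v ≤ (ENNReal.ofReal qmin)⁻¹ * DD u (u+v) := by
    intro u v
    by_cases hv : v ∈ S2R
    · have hq1 : qmin ≤ propDens d η u (u+v) := hq u v hv
      have hq0 : ENNReal.ofReal qmin ≠ 0 := by
        simp only [ne_eq, ENNReal.ofReal_eq_zero, not_le]
        linarith
      have hone : (1:ℝ≥0∞) ≤ (ENNReal.ofReal qmin)⁻¹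
          * ENNReal.ofReal (propDens d η u (u+v)) := by
        rw [← ENNReal.inv_mul_cancel hq0 ENNReal.ofReal_ne_top]
        exact mul_le_mul_right (ENNReal.ofReal_le_ofReal hq1) _
      have hsplit : ENNReal.ofReal ((g u - g (u+v))^2
            * (propDens d η u (u+v) * min (p u) (p (u+v))))
          = ENNReal.ofReal ((g u - g (u+v))^2) * (ENNReal.ofReal (propDens d η u (u+v))
            * ENNReal.ofReal (min (p u) (p (u+v)))) := by
        rw [ENNReal.ofReal_mul (sq_nonneg _), ENNReal.ofReal_mul (le_trans hqmin.le hq1)]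
      simp only [hK, hDD, hι, Set.indicator_of_mem hv]
      rw [hsplit]
      calc ENNReal.ofReal ((g u - g (u+v))^2)
            * (χ u * χ (u+v) * 1 * ENNReal.ofReal (min (p u) (p (u+v))))
          = 1 * (ENNReal.ofReal ((g u - g (u+v))^2)
            * (χ u * χ (u+v) * ENNReal.ofReal (min (p u) (p (u+v))))) := by ring
        _ ≤ ((ENNReal.ofReal qmin)⁻¹ * ENNReal.ofReal (propDens d η u (u+v)))
            * (ENNReal.ofReal ((g u - g (u+v))^2)
              * (χ u * χ (u+v) * ENNReal.ofReal (min (p u) (p (u+v))))) :=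
            mul_le_mul_left hone _
        _ = (ENNReal.ofReal qmin)⁻¹ * (χ u * χ (u+v)
            * (ENNReal.ofReal ((g u - g (u+v))^2) * (ENNReal.ofReal (propDens d η u (u+v))
              * ENNReal.ofReal (min (p u) (p (u+v)))))) := by ring
    · simp only [hK, hι, Set.indicator_of_notMem hv]
      simp
  -- Step 7 : conclude with proposal integral
  have hDDv : Measurable (Function.uncurry fun v u : Fin d → ℝ => DD u (u+v)) :=
    hDDu.comp (measurable_snd.prodMk (measurable_snd.add measurable_fst))
  have step7 : ∫⁻ v, ∫⁻ u, K u v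
      ≤ (ENNReal.ofReal qmin)⁻¹ * ∫⁻ x, ∫⁻ y, DD x y := by
    calc ∫⁻ v, ∫⁻ u, K u v
        ≤ ∫⁻ v, ∫⁻ u, (ENNReal.ofReal qmin)⁻¹ * DD u (u+v) :=
          lintegral_mono fun v => lintegral_mono fun u => step6 u v
      _ = (ENNReal.ofReal qmin)⁻¹ * ∫⁻ v, ∫⁻ u, DD u (u+v) := by
          have e1 : ∀ v, ∫⁻ u, (ENNReal.ofReal qmin)⁻¹ * DD u (u+v)
              = (ENNReal.ofReal qmin)⁻¹ * ∫⁻ u, DD u (u+v) := by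
            intro v
            exact lintegral_const_mul _ ((hDDv.of_uncurry_left (x := v)))
          simp_rw [e1]
          exact lintegral_const_mul _ (Measurable.lintegral_prod_right hDDv)
      _ = (ENNReal.ofReal qmin)⁻¹ * ∫⁻ u, ∫⁻ v, DD u (u+v) := by
          congr 1
          exact lintegral_lintegral_swap hDDv.aemeasurable
      _ = (ENNReal.ofReal qmin)⁻¹ * ∫⁻ x, ∫⁻ y, DD x y := by
          congr 1
          apply lintegral_congr
          intro u
          simp_rw [add_comm u]
          exact lintegral_add_right_eq_self (fun w => DD u w) u
  -- per-j bound
  have stepT : ∀ j ∈ Finset.range L, ∫⁻ x, ∫⁻ v, G j x v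
      ≤ ENNReal.ofReal Mv * ((ENNReal.ofReal qmin)⁻¹ * ∫⁻ x, ∫⁻ y, DD x y) := by
    intro j hjr
    have hj : j + 1 ≤ L := Finset.mem_range.mp hjr
    calc ∫⁻ x, ∫⁻ v, G j x v
        ≤ ∫⁻ x, ∫⁻ v, ENNReal.ofReal Mv * K (x + (j:ℝ)•v) v :=
          lintegral_mono fun x => lintegral_mono fun v => step4 j hj x v
      _ = ENNReal.ofReal Mv * ∫⁻ x, ∫⁻ v, K (x + (j:ℝ)•v) v := by
          have e1 : ∀ x, ∫⁻ v, ENNReal.ofReal Mv * K (x + (j:ℝ)•v) v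
              = ENNReal.ofReal Mv * ∫⁻ v, K (x + (j:ℝ)•v) v := by
            intro x
            exact lintegral_const_mul _ ((hKj j).of_uncurry_left (x := x))
          simp_rw [e1]
          exact lintegral_const_mul _ (Measurable.lintegral_prod_right (hKj j))
      _ = ENNReal.ofReal Mv * ∫⁻ v, ∫⁻ u, K u v := by rw [step5 j]
      _ ≤ ENNReal.ofReal Mv * ((ENNReal.ofReal qmin)⁻¹ * ∫⁻ x, ∫⁻ y, DD x y) :=
          mul_le_mul_right step7 _
  -- assemble
  calc ∫⁻ x, ∫⁻ y, A x y
      = ENNReal.ofReal ((L:ℝ)^d) * ∫⁻ x, ∫⁻ v, A x (x + (L:ℝ)•v) := step1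
    _ ≤ ENNReal.ofReal ((L:ℝ)^d) * ((L:ℝ≥0∞) * ∑ j ∈ Finset.range L, ∫⁻ x, ∫⁻ v, G j x v) :=
        mul_le_mul_right step3 _
    _ ≤ ENNReal.ofReal ((L:ℝ)^d) * ((L:ℝ≥0∞) * ∑ _j ∈ Finset.range L,
          ENNReal.ofReal Mv * ((ENNReal.ofReal qmin)⁻¹ * ∫⁻ x, ∫⁻ y, DD x y)) :=
        mul_le_mul_right (mul_le_mul_right (Finset.sum_le_sum stepT) _) _
    _ = (L:ℝ≥0∞)^(d+2) * ENNReal.ofReal Mv * (ENNReal.ofReal qmin)⁻¹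
          * ∫⁻ x, ∫⁻ y, DD x y := by
        rw [Finset.sum_const, Finset.card_range, nsmul_eq_mul,
          ENNReal.ofReal_pow (by positivity), ENNReal.ofReal_natCast]
        ring

end SG

namespace SG
open MeasureTheory ENNReal
variable {d : ℕ}

lemma indicator_mul_point {B : Set (Fin d → ℝ)} (f : (Fin d → ℝ) → ℝ≥0∞) (y : Fin d → ℝ) :
    B.indicator f y = B.indicator (fun _ => (1:ℝ≥0∞)) y * f y := by
  by_cases hy : y ∈ B <;>
    simp [Set.indicator_of_mem, Set.indicator_of_notMem, hy]

lemma double_int {B : Set (Fin d → ℝ)} (hB : MeasurableSet B)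
    (F : (Fin d → ℝ) → (Fin d → ℝ) → ℝ)
    (hFmeas : Measurable (Function.uncurry F)) (hFnn : ∀ x y, 0 ≤ F x y)
    (hfin : ∀ x, (∫⁻ y, (B.indicator (fun _ => (1:ℝ≥0∞)) y) * ENNReal.ofReal (F x y)) ≠ ⊤) :
    ∫ x in B, ∫ y in B, F x y
      = (∫⁻ x, ∫⁻ y, (B.indicator (fun _ => (1:ℝ≥0∞)) x) * (B.indicator (fun _ => (1:ℝ≥0∞)) y)
          * ENNReal.ofReal (F x y)).toReal := by
  set χ : (Fin d → ℝ) → ℝ≥0∞ := B.indicator (fun _ => (1:ℝ≥0∞)) with hχ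
  have hχmeas : Measurable χ := measurable_const.indicator hB
  set h : (Fin d → ℝ) → ℝ≥0∞ := fun x => ∫⁻ y, χ y * ENNReal.ofReal (F x y) with hh
  have hhu : Measurable (Function.uncurry fun x y => χ y * ENNReal.ofReal (F x y)) :=
    (hχmeas.comp measurable_snd).mul (ENNReal.measurable_ofReal.comp hFmeas)
  have hhmeas : Measurable h := hhu.lintegral_prod_right
  have hinner : ∀ x, ∫ y in B, F x y = (h x).toReal := by
    intro x
    rw [MeasureTheory.integral_eq_lintegral_of_nonneg_ae (ae_of_all _ (fun y => hFnn x y))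
      ((hFmeas.of_uncurry_left).aestronglyMeasurable)]
    congr 1
    rw [← lintegral_indicator hB]
    apply lintegral_congr
    intro y
    exact indicator_mul_point _ y
  have houter : ∫ x in B, ∫ y in B, F x y = ∫ x in B, (h x).toReal :=
    setIntegral_congr_fun hB (fun x _ => hinner x)
  rw [houter,
    MeasureTheory.integral_eq_lintegral_of_nonneg_ae
      (ae_of_all _ (fun x => ENNReal.toReal_nonneg))
      (hhmeas.ennreal_toReal.aestronglyMeasurable)]
  congr 1
  calc ∫⁻ x in B, ENNReal.ofReal ((h x).toReal)
      = ∫⁻ x in B, h x := by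
        apply lintegral_congr
        intro x
        rw [ENNReal.ofReal_toReal (hfin x)]
    _ = ∫⁻ x, χ x * h x := by
        rw [← lintegral_indicator hB]
        apply lintegral_congr
        intro x
        exact indicator_mul_point _ x
    _ = ∫⁻ x, ∫⁻ y, χ x * χ y * ENNReal.ofReal (F x y) := by
        apply lintegral_congr
        intro x
        rw [hh]
        rw [← lintegral_const_mul _ (hhu.of_uncurry_left (x := x))]
        apply lintegral_congr
        intro y
        ring

lemma lint_chi {B : Set (Fin d → ℝ)} (hBmeas : MeasurableSet B) :
    (∫⁻ a, B.indicator (fun _ => (1:ℝ≥0∞)) a) = volume B := by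
  rw [lintegral_indicator hBmeas]
  exact setLIntegral_one B

lemma pt_bound {B : Set (Fin d → ℝ)} (g : (Fin d → ℝ) → ℝ) (C : ℝ) (hC : 0 ≤ C)
    (W : (Fin d → ℝ) → (Fin d → ℝ) → ℝ) (hW0 : ∀ x y, 0 ≤ W x y) (hW : ∀ x y, W x y ≤ C)
    (x y : Fin d → ℝ) :
    (B.indicator (fun _ => (1:ℝ≥0∞)) y) * ENNReal.ofReal ((g x - g y)^2 * W x y)
      ≤ ENNReal.ofReal (2*C*(g x)^2 + 2*C) * (B.indicator (fun _ => (1:ℝ≥0∞)) y)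
        + ENNReal.ofReal (2*C) * ((B.indicator (fun _ => (1:ℝ≥0∞)) y)
            * ENNReal.ofReal (g y^2)) := by
  by_cases hy : y ∈ B
  · rw [Set.indicator_of_mem hy]
    simp only [one_mul, mul_one]
    calc ENNReal.ofReal ((g x - g y)^2 * W x y)
        ≤ ENNReal.ofReal ((2*C*(g x)^2 + 2*C) + 2*C * (g y)^2) := by
          apply ENNReal.ofReal_le_ofReal
          nlinarith [hW x y, hW0 x y, sq_nonneg (g x - g y), sq_nonneg (g x + g y),
            sq_nonneg (g y), sq_nonneg (g x)]
      _ = ENNReal.ofReal (2*C*(g x)^2 + 2*C)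
          + ENNReal.ofReal (2*C) * ENNReal.ofReal ((g y)^2) := by
          rw [ENNReal.ofReal_add (by positivity) (by positivity),
            ENNReal.ofReal_mul (by positivity)]
  · rw [Set.indicator_of_notMem hy]
    simp

lemma bnd_int {B : Set (Fin d → ℝ)} (g : (Fin d → ℝ) → ℝ) (c1 : ℝ≥0∞)
    (hgmeas : Measurable g) (hBmeas : MeasurableSet B) :
    ∫⁻ y, (c1 * (B.indicator (fun _ => (1:ℝ≥0∞)) y)
        + ENNReal.ofReal (2*C') * ((B.indicator (fun _ => (1:ℝ≥0∞)) y)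
            * ENNReal.ofReal (g y^2)))
      = c1 * volume B + ENNReal.ofReal (2*C')
          * ∫⁻ y, (B.indicator (fun _ => (1:ℝ≥0∞)) y) * ENNReal.ofReal (g y^2) := by
  have hχmeas : Measurable (B.indicator (fun _ => (1:ℝ≥0∞))) :=
    measurable_const.indicator hBmeas
  have hm : Measurable fun y => B.indicator (fun _ => (1:ℝ≥0∞)) y * ENNReal.ofReal (g y ^ 2) :=
    hχmeas.mul (ENNReal.measurable_ofReal.comp (hgmeas.pow_const 2))
  rw [lintegral_add_left (hχmeas.const_mul _),
    lintegral_const_mul _ hχmeas,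
    lintegral_const_mul _ hm, lint_chi hBmeas]

lemma inner_fin {B : Set (Fin d → ℝ)} (g : (Fin d → ℝ) → ℝ) (C : ℝ) (hC : 0 ≤ C)
    (hIB : (∫⁻ y, (B.indicator (fun _ => (1:ℝ≥0∞)) y) * ENNReal.ofReal (g y^2)) ≠ ⊤)
    (hvol : volume B ≠ ⊤) (hgmeas : Measurable g) (hBmeas : MeasurableSet B)
    (W : (Fin d → ℝ) → (Fin d → ℝ) → ℝ) (hW0 : ∀ x y, 0 ≤ W x y) (hW : ∀ x y, W x y ≤ C) :
    ∀ x, (∫⁻ y, (B.indicator (fun _ => (1:ℝ≥0∞)) y)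
      * ENNReal.ofReal ((g x - g y)^2 * W x y)) ≠ ⊤ := by
  intro x
  have h1 := lintegral_mono (μ := volume) (fun y => pt_bound (B := B) g C hC W hW0 hW x y)
  rw [bnd_int (C' := C) g _ hgmeas hBmeas] at h1
  apply ne_top_of_le_ne_top _ h1
  apply ENNReal.add_ne_top.mpr
  exact ⟨ENNReal.mul_ne_top ENNReal.ofReal_ne_top hvol,
    ENNReal.mul_ne_top ENNReal.ofReal_ne_top hIB⟩

lemma double_fin {B : Set (Fin d → ℝ)} (g : (Fin d → ℝ) → ℝ) (C : ℝ) (hC : 0 ≤ C)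
    (hIB : (∫⁻ y, (B.indicator (fun _ => (1:ℝ≥0∞)) y) * ENNReal.ofReal (g y^2)) ≠ ⊤)
    (hvol : volume B ≠ ⊤) (hgmeas : Measurable g) (hBmeas : MeasurableSet B)
    (W : (Fin d → ℝ) → (Fin d → ℝ) → ℝ) (hW0 : ∀ x y, 0 ≤ W x y) (hW : ∀ x y, W x y ≤ C) :
    (∫⁻ x, ∫⁻ y, (B.indicator (fun _ => (1:ℝ≥0∞)) x) * (B.indicator (fun _ => (1:ℝ≥0∞)) y)
      * ENNReal.ofReal ((g x - g y)^2 * W x y)) ≠ ⊤ := by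
  set χ : (Fin d → ℝ) → ℝ≥0∞ := B.indicator (fun _ => (1:ℝ≥0∞)) with hχ
  have hχmeas : Measurable χ := measurable_const.indicator hBmeas
  have hχle : ∀ x, χ x ≤ 1 := by
    intro x
    rw [hχ]
    by_cases hx : x ∈ B <;> simp [Set.indicator_of_mem, Set.indicator_of_notMem, hx]
  have hstep : ∀ x, ∫⁻ y, χ x * χ y * ENNReal.ofReal ((g x - g y)^2 * W x y)
      ≤ χ x * (ENNReal.ofReal (2*C*(g x)^2 + 2*C) * volume B
        + ENNReal.ofReal (2*C) * ∫⁻ y, χ y * ENNReal.ofReal (g y^2)) := by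
    intro x
    have h1 : ∀ y, χ x * χ y * ENNReal.ofReal ((g x - g y)^2 * W x y)
        ≤ χ x * (ENNReal.ofReal (2*C*(g x)^2 + 2*C) * χ y
          + ENNReal.ofReal (2*C) * (χ y * ENNReal.ofReal (g y^2))) := by
      intro y
      rw [mul_assoc]
      exact mul_le_mul_right (pt_bound g C hC W hW0 hW x y) _
    calc ∫⁻ y, χ x * χ y * ENNReal.ofReal ((g x - g y)^2 * W x y)
        ≤ ∫⁻ y, χ x * (ENNReal.ofReal (2*C*(g x)^2 + 2*C) * χ y
            + ENNReal.ofReal (2*C) * (χ y * ENNReal.ofReal (g y^2))) := lintegral_mono h1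
      _ = χ x * ∫⁻ y, (ENNReal.ofReal (2*C*(g x)^2 + 2*C) * χ y
            + ENNReal.ofReal (2*C) * (χ y * ENNReal.ofReal (g y^2))) := by
          have hm : Measurable fun y => ENNReal.ofReal (2*C*(g x)^2 + 2*C) * χ y
              + ENNReal.ofReal (2*C) * (χ y * ENNReal.ofReal (g y^2)) :=
            (measurable_const.mul hχmeas).add
              (measurable_const.mul (hχmeas.mul (ENNReal.measurable_ofReal.comp
                (hgmeas.pow_const 2))))
          exact lintegral_const_mul _ hm
      _ = χ x * (ENNReal.ofReal (2*C*(g x)^2 + 2*C) * volume B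
          + ENNReal.ofReal (2*C) * ∫⁻ y, χ y * ENNReal.ofReal (g y^2)) := by
          rw [bnd_int (C' := C) g _ hgmeas hBmeas]
  set IBt : ℝ≥0∞ := ∫⁻ y, χ y * ENNReal.ofReal (g y^2) with hIBt
  have hstep2 : ∀ x, χ x * (ENNReal.ofReal (2*C*(g x)^2 + 2*C) * volume B
        + ENNReal.ofReal (2*C) * IBt)
      ≤ (ENNReal.ofReal (2*C) * volume B) * (χ x * ENNReal.ofReal ((g x)^2))
        + ((ENNReal.ofReal (2*C) * volume B) * χ x
          + (ENNReal.ofReal (2*C) * IBt) * χ x) := by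
    intro x
    have he : ENNReal.ofReal (2*C*(g x)^2 + 2*C)
        = ENNReal.ofReal (2*C) * ENNReal.ofReal ((g x)^2) + ENNReal.ofReal (2*C) := by
      rw [ENNReal.ofReal_add (by positivity) (by positivity),
        ENNReal.ofReal_mul (by positivity)]
    rw [he]
    apply le_of_eq
    ring
  have hfin2 : (∫⁻ x, ((ENNReal.ofReal (2*C) * volume B) * (χ x * ENNReal.ofReal ((g x)^2))
        + ((ENNReal.ofReal (2*C) * volume B) * χ x
          + (ENNReal.ofReal (2*C) * IBt) * χ x))) ≠ ⊤ := by
    have hm : Measurable fun x => χ x * ENNReal.ofReal ((g x) ^ 2) :=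
      hχmeas.mul (ENNReal.measurable_ofReal.comp (hgmeas.pow_const 2))
    rw [lintegral_add_left (hm.const_mul _),
      lintegral_add_left (hχmeas.const_mul _),
      lintegral_const_mul _ hm,
      lintegral_const_mul _ hχmeas, lintegral_const_mul _ hχmeas,
      lint_chi hBmeas]
    have hc2 : ENNReal.ofReal (2*C) ≠ ⊤ := ENNReal.ofReal_ne_top
    apply ENNReal.add_ne_top.mpr
    constructor
    · exact ENNReal.mul_ne_top (ENNReal.mul_ne_top hc2 hvol) hIB
    · apply ENNReal.add_ne_top.mpr
      constructor
      · exact ENNReal.mul_ne_top (ENNReal.mul_ne_top hc2 hvol) hvol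
      · exact ENNReal.mul_ne_top (ENNReal.mul_ne_top hc2 hIB) hvol
  apply ne_top_of_le_ne_top hfin2
  apply lintegral_mono
  intro x
  exact le_trans (hstep x) (hstep2 x)

end SG

namespace SG
open MeasureTheory ENNReal Matrix
variable {d : ℕ}

lemma memLp_fin (p : (Fin d → ℝ) → ℝ) (hp : Measurable p)
    (g : (Fin d → ℝ) → ℝ) (hgmeas : Measurable g)
    (hg : MemLp g 2 (volume.withDensity fun x => ENNReal.ofReal (p x))) :
    (∫⁻ x, ENNReal.ofReal (p x) * ENNReal.ofReal (g x^2)) ≠ ⊤ := by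
  set μπ := volume.withDensity fun x => ENNReal.ofReal (p x) with hμπ
  have h1 : Integrable (fun x => ‖g x‖ ^ ((2:ℝ≥0∞)).toReal) μπ :=
    hg.integrable_norm_rpow (by norm_num) (by norm_num)
  have h2 := h1.2
  rw [MeasureTheory.hasFiniteIntegral_iff_norm] at h2
  have h3 : (∫⁻ x, ENNReal.ofReal (g x^2) ∂μπ) ≠ ⊤ := by
    have heq : ∀ x, ENNReal.ofReal (g x^2)
        = ENNReal.ofReal ‖‖g x‖ ^ ((2:ℝ≥0∞)).toReal‖ := by
      intro x
      congr 1
      rw [ENNReal.toReal_ofNat, Real.norm_eq_abs, Real.norm_eq_abs,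
        Real.rpow_two, abs_of_nonneg (by positivity), sq_abs]
    simp_rw [heq]
    exact h2.ne
  have h4 : (∫⁻ x, ENNReal.ofReal (g x^2) ∂μπ)
      = ∫⁻ x, ENNReal.ofReal (p x) * ENNReal.ofReal (g x^2) := by
    have hPm : Measurable fun x => ENNReal.ofReal (p x) := ENNReal.measurable_ofReal.comp hp
    have hgm2 : Measurable fun x => ENNReal.ofReal (g x ^ 2) :=
      ENNReal.measurable_ofReal.comp (hgmeas.pow_const 2)
    rw [hμπ, lintegral_withDensity_eq_lintegral_mul volume hPm hgm2]
    exact lintegral_congr fun x => rfl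
  rw [← h4]
  exact h3

lemma IB_fin {B : Set (Fin d → ℝ)} (p : (Fin d → ℝ) → ℝ) (hp : Measurable p)
    (ε : ℝ) (hε : 0 < ε) (hεB : ∀ x ∈ B, ε ≤ p x)
    (g : (Fin d → ℝ) → ℝ) (hgmeas : Measurable g)
    (hfin : (∫⁻ x, ENNReal.ofReal (p x) * ENNReal.ofReal (g x^2)) ≠ ⊤) :
    (∫⁻ y, (B.indicator (fun _ => (1:ℝ≥0∞)) y) * ENNReal.ofReal (g y^2)) ≠ ⊤ := by
  have hpt : ∀ y, (B.indicator (fun _ => (1:ℝ≥0∞)) y) * ENNReal.ofReal (g y^2)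
      ≤ (ENNReal.ofReal ε)⁻¹ * (ENNReal.ofReal (p y) * ENNReal.ofReal (g y^2)) := by
    intro y
    by_cases hy : y ∈ B
    · rw [Set.indicator_of_mem hy, one_mul]
      have hεy : ENNReal.ofReal ε ≤ ENNReal.ofReal (p y) := ENNReal.ofReal_le_ofReal (hεB y hy)
      have hε0 : ENNReal.ofReal ε ≠ 0 := by
        simp only [ne_eq, ENNReal.ofReal_eq_zero, not_le]; exact hε
      calc ENNReal.ofReal (g y^2)
          = ((ENNReal.ofReal ε)⁻¹ * ENNReal.ofReal ε) * ENNReal.ofReal (g y^2) := by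
            rw [ENNReal.inv_mul_cancel hε0 ENNReal.ofReal_ne_top, one_mul]
        _ ≤ ((ENNReal.ofReal ε)⁻¹ * ENNReal.ofReal (p y)) * ENNReal.ofReal (g y^2) :=
            mul_le_mul_left (mul_le_mul_right hεy _) _
        _ = (ENNReal.ofReal ε)⁻¹ * (ENNReal.ofReal (p y) * ENNReal.ofReal (g y^2)) := by
            rw [mul_assoc]
    · rw [Set.indicator_of_notMem hy, zero_mul]
      exact zero_le
  have h2 := lintegral_mono (μ := volume) hpt
  have hm : Measurable fun a => ENNReal.ofReal (p a) * ENNReal.ofReal (g a ^ 2) :=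
    (ENNReal.measurable_ofReal.comp hp).mul (ENNReal.measurable_ofReal.comp (hgmeas.pow_const 2))
  rw [lintegral_const_mul _ hm] at h2
  apply ne_top_of_le_ne_top _ h2
  apply ENNReal.mul_ne_top _ hfin
  simp only [ne_eq, ENNReal.inv_eq_top, ENNReal.ofReal_eq_zero, not_le]
  exact hε

lemma ae_vol_of_ae_withDensity (p : (Fin d → ℝ) → ℝ) (hp : Measurable p)
    (hppos : ∀ x, 0 < p x) {f h : (Fin d → ℝ) → ℝ}
    (hfh : f =ᵐ[volume.withDensity fun x => ENNReal.ofReal (p x)] h) : f =ᵐ[volume] h := by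
  have hP : Measurable fun x => ENNReal.ofReal (p x) := ENNReal.measurable_ofReal.comp hp
  rw [Filter.EventuallyEq, ae_iff] at hfh ⊢
  have h2 := (withDensity_apply_eq_zero hP).mp hfh
  have h3 : {x | (fun x => ENNReal.ofReal (p x)) x ≠ 0} ∩ {a | ¬f a = h a}
      = {a | ¬f a = h a} := by
    apply Set.inter_eq_self_of_subset_right
    intro a _
    simp only [Set.mem_setOf_eq, ne_eq, ENNReal.ofReal_eq_zero, not_le]
    exact hppos a
  rwa [h3] at h2

lemma det_ge {Sig : Matrix (Fin d) (Fin d) ℝ} (hSig : Sig.PosDef) {γ : ℝ}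
    (hγ : IsLeast (Set.range hSig.isHermitian.eigenvalues) γ) (hd : 0 < d) :
    0 < γ ∧ γ^d ≤ Sig.det := by
  obtain ⟨hmem, hlb⟩ := hγ
  obtain ⟨i, hi⟩ := hmem
  have hpos : 0 < γ := hi ▸ hSig.eigenvalues_pos i
  refine ⟨hpos, ?_⟩
  have hdet : Sig.det = ∏ j, hSig.isHermitian.eigenvalues j := by
    exact_mod_cast hSig.isHermitian.det_eq_prod_eigenvalues
  rw [hdet]
  calc γ^d = ∏ _j : Fin d, γ := by
        rw [Finset.prod_const, Finset.card_univ, Fintype.card_fin]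
    _ ≤ ∏ j, hSig.isHermitian.eigenvalues j :=
        Finset.prod_le_prod (fun _ _ => hpos.le) (fun j _ => hlb ⟨j, rfl⟩)

-- segment facts
lemma seg_combo {L : ℝ} (hL : 0 < L) (a : ℝ) (x v : Fin d → ℝ) :
    x + a•v = (1-a/L)•x + (a/L)•(x + L•v) := by
  have hL0 : L ≠ 0 := hL.ne'
  ext i
  simp only [Pi.add_apply, Pi.smul_apply, smul_eq_mul]
  field_simp
  ring

lemma seg_mem {R : ℝ} {L : ℝ} (hL : 0 < L) (a : ℝ) (h0 : 0 ≤ a) (h1 : a ≤ L)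
    (x v : Fin d → ℝ) (hx : euclNorm x ≤ R) (hy : euclNorm (x + L•v) ≤ R) :
    euclNorm (x + a•v) ≤ R := by
  rw [seg_combo hL a x v]
  exact ball_convex _ (by positivity) (by rw [div_le_one hL]; exact h1) hx hy

lemma seg_min {Sig : Matrix (Fin d) (Fin d) ℝ} {β : ℝ} {μ : Fin d → ℝ}
    (hSig : Sig.PosDef) (hβ : 0 < β) {L : ℝ} (hL : 0 < L) (a : ℝ) (h0 : 0 ≤ a) (h1 : a ≤ L)
    (x v : Fin d → ℝ) :
    min (gaussDens Sig β μ x) (gaussDens Sig β μ (x + L•v))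
      ≤ gaussDens Sig β μ (x + a•v) := by
  rw [seg_combo hL a x v]
  exact gaussDens_segment hSig hβ _ _ _ (by positivity) (by rw [div_le_one hL]; exact h1)

lemma dist_bound {R : ℝ} {L : ℕ} (hL : 1 ≤ L) (x v : Fin d → ℝ)
    (hx : euclNorm x ≤ R) (hy : euclNorm (x + (L:ℝ)•v) ≤ R) :
    euclNorm v ≤ 2*R/(L:ℝ) := by
  have hL0 : (0:ℝ) < (L:ℝ) := by exact_mod_cast hL
  have h1 : (L:ℝ)•v = (x + (L:ℝ)•v) + (-1:ℝ)•x := by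
    ext i; simp only [Pi.add_apply, Pi.smul_apply, smul_eq_mul]; ring
  have h2 : euclNorm ((L:ℝ)•v) ≤ 2*R := by
    rw [h1]
    calc euclNorm ((x + (L:ℝ)•v) + (-1:ℝ)•x)
        ≤ euclNorm (x + (L:ℝ)•v) + euclNorm ((-1:ℝ)•x) := euclNorm_add_le _ _
      _ ≤ R + R := by
          rw [euclNorm_smul]
          simp only [abs_neg, abs_one, one_mul]
          exact add_le_add hy hx
      _ = 2*R := by ring
  rw [euclNorm_smul, abs_of_pos hL0] at h2
  rw [le_div_iff₀ hL0]
  linarith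

lemma prop_lb {η R : ℝ} (hη : 0 < η) {L : ℕ} (hL : 1 ≤ L) (hR : 0 ≤ R)
    (u v : Fin d → ℝ) (hv : euclNorm v ≤ 2*R/(L:ℝ)) :
    (2*Real.pi*η)^(-(d:ℝ)/2) * Real.exp (-((2*R/(L:ℝ))^2)/(2*η)) ≤ propDens d η u (u+v) := by
  have hL0 : (0:ℝ) < (L:ℝ) := by exact_mod_cast hL
  unfold propDens
  have hrp : (0:ℝ) ≤ (2*Real.pi*η)^(-(d:ℝ)/2) := by
    apply Real.rpow_nonneg
    have := Real.pi_pos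
    positivity
  apply mul_le_mul_of_nonneg_left _ hrp
  apply Real.exp_le_exp.mpr
  have h1 : ∑ k, ((u+v) k - u k)^2 = ∑ k, (v k)^2 := by
    apply Finset.sum_congr rfl
    intro k _
    simp only [Pi.add_apply]
    ring
  have h2 : ∑ k, (v k)^2 ≤ (2*R/(L:ℝ))^2 := by
    rw [← euclNorm_sq]
    apply pow_le_pow_left₀ (euclNorm_nonneg v) hv
  rw [h1]
  have h2η : (0:ℝ) < 2*η := by linarith
  rw [neg_div, neg_div, neg_le_neg_iff]
  gcongr


end SG

namespace SG
open MeasureTheory ENNReal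
variable {d : ℕ}

lemma double_congr_g {B : Set (Fin d → ℝ)} (hB : MeasurableSet B)
    {g g' : (Fin d → ℝ) → ℝ} (hgg' : g =ᵐ[volume] g')
    (W : (Fin d → ℝ) → (Fin d → ℝ) → ℝ) :
    ∫ x in B, ∫ y in B, (g x - g y)^2 * W x y
      = ∫ x in B, ∫ y in B, (g' x - g' y)^2 * W x y := by
  apply setIntegral_congr_ae hB
  filter_upwards [hgg'] with x hx
  intro _
  apply setIntegral_congr_ae hB
  filter_upwards [hgg'] with y hy
  intro _
  rw [hx, hy]

lemma prop_ub {η : ℝ} (hη : 0 < η) (x y : Fin d → ℝ) :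
    propDens d η x y ≤ (2*Real.pi*η)^(-(d:ℝ)/2) := by
  unfold propDens
  have hrp : (0:ℝ) ≤ (2*Real.pi*η)^(-(d:ℝ)/2) := by
    apply Real.rpow_nonneg
    have := Real.pi_pos
    positivity
  have hexp : Real.exp (-(∑ k, (y k - x k) ^ 2) / (2 * η)) ≤ 1 := by
    rw [Real.exp_le_one_iff]
    have h1 : (0:ℝ) ≤ ∑ k, (y k - x k)^2 := by positivity
    have h2 : (0:ℝ) < 2*η := by linarith
    apply div_nonpos_of_nonpos_of_nonneg (by linarith) h2.le
  calc (2*Real.pi*η)^(-(d:ℝ)/2) * Real.exp (-(∑ k, (y k - x k) ^ 2) / (2 * η))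
      ≤ (2*Real.pi*η)^(-(d:ℝ)/2) * 1 := mul_le_mul_of_nonneg_left hexp hrp
    _ = _ := mul_one _

lemma final_scalar (d : ℕ) (γ detS β R η : ℝ) (L : ℕ) (hL : 1 ≤ L)
    (hγ : 0 < γ) (hγd : γ^d ≤ detS) (hβ0 : 0 < β) (hβ1 : β ≤ 1)
    (hR : 0 < R) (hη : 0 < η)
    (hkey : (((L:ℝ))^(d+2) * Real.exp (2*(R^2/η)/(L:ℝ)^2))^2 ≤ 169 * (R^2/η)^(d+3)) :
    (γ ^ ((d:ℝ)/2) * η ^ ((3:ℝ)/2) / (13 * R^(d+3))) * ((L:ℝ)^(d+2)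
        * ((β/(2*Real.pi))^((d:ℝ)/2) / Real.sqrt detS))
      ≤ (2*Real.pi*η)^(-(d:ℝ)/2) * Real.exp (-((2*R/(L:ℝ))^2)/(2*η)) := by
  have hπ := Real.pi_pos
  have hL0 : (0:ℝ) < (L:ℝ) := by exact_mod_cast hL
  set sη := Real.sqrt η with hsηdef
  have hsη : 0 < sη := Real.sqrt_pos.mpr hη
  have hsη2 : sη^2 = η := Real.sq_sqrt hη.le
  -- unsquared key
  have hA : ((L:ℝ))^(d+2) * Real.exp (2*(R^2/η)/(L:ℝ)^2) ≤ 13 * R^(d+3) / sη^(d+3) := by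
    have hB2 : (13 * R^(d+3) / sη^(d+3))^2 = 169 * (R^2/η)^(d+3) := by
      rw [div_pow, mul_pow, div_pow, ← pow_mul, ← pow_mul, ← pow_mul]
      rw [show (d+3)*2 = 2*(d+3) by ring, pow_mul, pow_mul, hsη2]
      norm_num
      ring
    have h1 : (0:ℝ) ≤ ((L:ℝ))^(d+2) * Real.exp (2*(R^2/η)/(L:ℝ)^2) := by positivity
    have h0 : (0:ℝ) ≤ 13 * R^(d+3) / sη^(d+3) := by positivity
    calc ((L:ℝ))^(d+2) * Real.exp (2*(R^2/η)/(L:ℝ)^2)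
        = Real.sqrt ((((L:ℝ))^(d+2) * Real.exp (2*(R^2/η)/(L:ℝ)^2))^2) :=
          (Real.sqrt_sq h1).symm
      _ ≤ Real.sqrt ((13 * R^(d+3) / sη^(d+3))^2) := by
          apply Real.sqrt_le_sqrt
          rw [hB2]
          exact hkey
      _ = 13 * R^(d+3) / sη^(d+3) := Real.sqrt_sq h0
  -- rpow conversions
  have hη32 : η ^ ((3:ℝ)/2) = sη^3 := by
    rw [hsηdef, Real.sqrt_eq_rpow, ← Real.rpow_natCast (η ^ ((1:ℝ)/2)) 3,
      ← Real.rpow_mul hη.le]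
    norm_num
  have hηd2 : η ^ ((d:ℝ)/2) = sη^d := by
    rw [hsηdef, Real.sqrt_eq_rpow, ← Real.rpow_natCast (η ^ ((1:ℝ)/2)) d,
      ← Real.rpow_mul hη.le]
    congr 1
    ring
  have hγd2 : γ ^ ((d:ℝ)/2) = Real.sqrt (γ^d) := by
    rw [Real.sqrt_eq_rpow, ← Real.rpow_natCast γ d, ← Real.rpow_mul hγ.le]
    congr 1
    ring
  have hdetpos : 0 < detS := lt_of_lt_of_le (pow_pos hγ d) hγd
  have hsdet : 0 < Real.sqrt detS := Real.sqrt_pos.mpr hdetpos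
  have hγdet : γ ^ ((d:ℝ)/2) ≤ Real.sqrt detS := by
    rw [hγd2]; exact Real.sqrt_le_sqrt hγd
  have hγd0 : 0 ≤ γ ^ ((d:ℝ)/2) := Real.rpow_nonneg hγ.le _
  have hβd : β ^ ((d:ℝ)/2) ≤ 1 := Real.rpow_le_one hβ0.le hβ1 (by positivity)
  have hβd0 : 0 ≤ β ^ ((d:ℝ)/2) := Real.rpow_nonneg hβ0.le _
  have hP : (0:ℝ) < (2*Real.pi)^((d:ℝ)/2) := Real.rpow_pos_of_pos (by positivity) _
  have hsplit1 : (β/(2*Real.pi))^((d:ℝ)/2) = β^((d:ℝ)/2) / (2*Real.pi)^((d:ℝ)/2) :=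
    Real.div_rpow hβ0.le (by positivity) _
  have hsplit2 : (2*Real.pi*η)^(-(d:ℝ)/2)
      = ((2*Real.pi)^((d:ℝ)/2))⁻¹ * (sη^d)⁻¹ := by
    rw [show (-(d:ℝ)/2) = -((d:ℝ)/2) by ring, Real.rpow_neg (by positivity),
      Real.mul_rpow (by positivity) hη.le, hηd2, mul_inv]
  have hexpeq : (-((2*R/(L:ℝ))^2/(2*η))) = -(2*(R^2/η)/(L:ℝ)^2) := by
    field_simp
  rw [hsplit2, hη32, hsplit1]
  rw [show (-((2*R/(L:ℝ))^2)/(2*η)) = -(2*(R^2/η)/(L:ℝ)^2) by field_simp]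
  rw [Real.exp_neg]
  set X := 2*(R^2/η)/(L:ℝ)^2 with hX
  set P := (2*Real.pi)^((d:ℝ)/2) with hPdef
  have hEx : 0 < Real.exp X := Real.exp_pos _
  have hprod : (L:ℝ)^(d+2) * Real.exp X * sη^(d+3) ≤ 13 * R^(d+3) := by
    have h2 := mul_le_mul_of_nonneg_right hA (le_of_lt (pow_pos hsη (d+3)))
    rwa [div_mul_cancel₀] at h2
    positivity
  have hstep1 : γ ^ ((d:ℝ)/2) * sη^3 / (13 * R^(d+3)) * ((L:ℝ)^(d+2)
        * (β^((d:ℝ)/2) / P / Real.sqrt detS))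
      ≤ sη^3 * (L:ℝ)^(d+2) / (13 * R^(d+3)) * P⁻¹ := by
    have heq : γ ^ ((d:ℝ)/2) * sη^3 / (13 * R^(d+3)) * ((L:ℝ)^(d+2)
          * (β^((d:ℝ)/2) / P / Real.sqrt detS))
        = (γ ^ ((d:ℝ)/2) / Real.sqrt detS) * β^((d:ℝ)/2)
            * (sη^3 * (L:ℝ)^(d+2) / (13 * R^(d+3)) * P⁻¹) := by
      field_simp
    rw [heq]
    have ha1 : γ ^ ((d:ℝ)/2) / Real.sqrt detS ≤ 1 := by
      rw [div_le_one hsdet]; exact hγdet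
    have ha0 : 0 ≤ γ ^ ((d:ℝ)/2) / Real.sqrt detS := by positivity
    have hc0 : 0 ≤ sη^3 * (L:ℝ)^(d+2) / (13 * R^(d+3)) * P⁻¹ := by positivity
    nlinarith [mul_nonneg ha0 hβd0, mul_le_one₀ ha1 hβd0 hβd]
  have hstep2 : sη^3 * (L:ℝ)^(d+2) / (13 * R^(d+3)) * P⁻¹
      ≤ P⁻¹ * (sη^d)⁻¹ * (Real.exp X)⁻¹ := by
    have h2 : sη^3 * (L:ℝ)^(d+2) / (13 * R^(d+3)) ≤ (sη^d)⁻¹ * (Real.exp X)⁻¹ := by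
      rw [← mul_inv, show (sη^d * Real.exp X)⁻¹ = 1/(sη^d * Real.exp X) by rw [one_div],
        div_le_div_iff₀ (by positivity) (by positivity)]
      calc sη^3 * (L:ℝ)^(d+2) * (sη^d * Real.exp X)
          = (L:ℝ)^(d+2) * Real.exp X * (sη^d * sη^3) := by ring
        _ = (L:ℝ)^(d+2) * Real.exp X * sη^(d+3) := by rw [← pow_add]
        _ ≤ 13 * R^(d+3) := hprod
        _ = 1 * (13 * R^(d+3)) := by ring
    calc sη^3 * (L:ℝ)^(d+2) / (13 * R^(d+3)) * P⁻¹
        = P⁻¹ * (sη^3 * (L:ℝ)^(d+2) / (13 * R^(d+3))) := by ring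
      _ ≤ P⁻¹ * ((sη^d)⁻¹ * (Real.exp X)⁻¹) :=
          mul_le_mul_of_nonneg_left h2 (by positivity)
      _ = P⁻¹ * (sη^d)⁻¹ * (Real.exp X)⁻¹ := by ring
  exact le_trans hstep1 hstep2

end SG


open MeasureTheory ENNReal

set_option maxHeartbeats 1000000

theorem stmt11 (d : ℕ) (hd : 0 < d)
    (μ : Fin d → ℝ)
    (Sig : Matrix (Fin d) (Fin d) ℝ) (hSig : Sig.PosDef)
    (γmin : ℝ) (hγmin : IsLeast (Set.range hSig.isHermitian.eigenvalues) γmin)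
    (β : ℝ) (hβ0 : 0 < β) (hβ1 : β ≤ 1)
    (R η : ℝ) (hR : 0 < R) (hη0 : 0 < η) (hηR : η ≤ R ^ 2) :
    ∀ g : (Fin d → ℝ) → ℝ,
      MemLp g 2 (volume.withDensity fun x => ENNReal.ofReal (gaussDens Sig β μ x)) →
      (γmin ^ ((d : ℝ) / 2) * η ^ ((3 : ℝ) / 2) / (13 * R ^ (d + 3))) *
          restVarDens (gaussDens Sig β μ) {x | euclNorm x ≤ R} g
        ≤ mhRestDirichlet η (gaussDens Sig β μ) {x | euclNorm x ≤ R} g := by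
  intro g hg
  set p := gaussDens Sig β μ with hpdef
  set Bs : Set (Fin d → ℝ) := {x | euclNorm x ≤ R} with hBdef
  have hBmeas : MeasurableSet Bs := SG.measurableSet_ball R
  have hvolB : volume Bs ≠ ⊤ := (SG.isCompact_ball R hR.le).measure_lt_top.ne
  have hp : Measurable p := (SG.continuous_gaussDens Sig β μ).measurable
  have hppos : ∀ x, 0 < p x := fun x => SG.gaussDens_pos hSig hβ0 x
  have hpnn : ∀ x, 0 ≤ p x := fun x => (hppos x).le
  set Mv := (β / (2 * Real.pi)) ^ ((d : ℝ) / 2) / Real.sqrt Sig.det with hMdef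
  have hpM : ∀ x, p x ≤ Mv := fun x => SG.gaussDens_le hSig hβ0 x
  have hMv0 : 0 ≤ Mv := le_trans (hpnn 0) (hpM 0)
  obtain ⟨ε, hε, hεB⟩ := SG.exists_gauss_min hSig hβ0 R hR
  obtain ⟨g', hg'sm, hgg'μ⟩ := hg.aestronglyMeasurable
  have hg'meas : Measurable g' := hg'sm.measurable
  have hgg' : g =ᵐ[volume] g' := SG.ae_vol_of_ae_withDensity p hp hppos hgg'μ
  have hg'L : MemLp g' 2 (volume.withDensity fun x => ENNReal.ofReal (p x)) :=
    hg.ae_eq hgg'μ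
  have hfinP : (∫⁻ x, ENNReal.ofReal (p x) * ENNReal.ofReal (g' x^2)) ≠ ⊤ :=
    SG.memLp_fin p hp g' hg'meas hg'L
  have hIB : (∫⁻ y, (Bs.indicator (fun _ => (1:ℝ≥0∞)) y) * ENNReal.ofReal (g' y^2)) ≠ ⊤ :=
    SG.IB_fin p hp ε hε hεB g' hg'meas hfinP
  -- choose L via the scalar lemma
  obtain ⟨L, hL1, hkey⟩ := SG.key (d+3) (by omega) (R^2/η)
    (by rw [le_div_iff₀ hη0]; linarith)
  have hkey' : (((L:ℝ))^(d+2) * Real.exp (2*(R^2/η)/(L:ℝ)^2))^2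
      ≤ 169 * (R^2/η)^(d+3) := hkey
  obtain ⟨hγ0, hγd⟩ := SG.det_ge hSig hγmin hd
  have hscal := SG.final_scalar d γmin Sig.det β R η L hL1 hγ0 hγd hβ0 hβ1 hR hη0 hkey'
  set qmin := (2*Real.pi*η)^(-(d:ℝ)/2) * Real.exp (-((2*R/(L:ℝ))^2)/(2*η)) with hqdef
  have hπ := Real.pi_pos
  have hqmin : 0 < qmin := by
    apply mul_pos (Real.rpow_pos_of_pos (by positivity) _) (Real.exp_pos _)
  have hL0 : (0:ℝ) < (L:ℝ) := by exact_mod_cast hL1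
  -- core hypotheses
  have hmem : ∀ (x v : Fin d → ℝ) (j : ℕ), j ≤ L → x ∈ Bs → x + (L:ℝ)•v ∈ Bs →
      x + (j:ℝ)•v ∈ Bs := by
    intro x v j hj hx hy
    exact SG.seg_mem hL0 (j:ℝ) (by positivity) (by exact_mod_cast hj) x v hx hy
  have hppc : ∀ (x v : Fin d → ℝ) (j : ℕ), j + 1 ≤ L → x ∈ Bs → x + (L:ℝ)•v ∈ Bs →
      p x * p (x + (L:ℝ)•v) ≤ Mv * min (p (x + (j:ℝ)•v)) (p (x + ((j:ℝ)+1)•v)) := by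
    intro x v j hj _ _
    have hj1 : ((j:ℝ)+1) ≤ (L:ℝ) := by exact_mod_cast hj
    have hm1 := SG.seg_min (μ := μ) hSig hβ0 hL0 (j:ℝ) (by positivity) (by linarith) x v
    have hm2 := SG.seg_min (μ := μ) hSig hβ0 hL0 ((j:ℝ)+1) (by positivity) hj1 x v
    rw [← hpdef] at hm1 hm2
    have h1 := hpM x
    have h2 := hpM (x + (L:ℝ)•v)
    have h3 := hpnn x
    have h4 := hpnn (x + (L:ℝ)•v)
    have hminle : min (p x) (p (x+(L:ℝ)•v))
        ≤ min (p (x + (j:ℝ)•v)) (p (x + ((j:ℝ)+1)•v)) := le_min hm1 hm2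
    rcases le_total (p x) (p (x + (L:ℝ)•v)) with hc | hc
    · have hmeq : min (p x) (p (x+(L:ℝ)•v)) = p x := min_eq_left hc
      nlinarith [hminle]
    · have hmeq : min (p x) (p (x+(L:ℝ)•v)) = p (x+(L:ℝ)•v) := min_eq_right hc
      nlinarith [hminle]
  have hdist : ∀ x v : Fin d → ℝ, x ∈ Bs → x + (L:ℝ)•v ∈ Bs →
      euclNorm v ≤ 2*R/(L:ℝ) := fun x v hx hy => SG.dist_bound hL1 x v hx hy
  have hq : ∀ u v : Fin d → ℝ, euclNorm v ≤ 2*R/(L:ℝ) → qmin ≤ propDens d η u (u + v) :=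
    fun u v hv => SG.prop_lb hη0 hL1 hR.le u v hv
  have hcore := SG.core Bs hBmeas p hp hpnn g' hg'meas η R Mv qmin hMv0 hqmin L hL1
    hmem hppc hdist hq
  -- F measurability and W bounds
  have hFV : Measurable (Function.uncurry fun x y : Fin d → ℝ =>
      (g' x - g' y)^2 * (p x * p y)) :=
    (((hg'meas.comp measurable_fst).sub (hg'meas.comp measurable_snd)).pow_const 2).mul
      ((hp.comp measurable_fst).mul (hp.comp measurable_snd))
  have hFD : Measurable (Function.uncurry fun x y : Fin d → ℝ =>
      (g' x - g' y)^2 * (propDens d η x y * min (p x) (p y))) :=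
    (((hg'meas.comp measurable_fst).sub (hg'meas.comp measurable_snd)).pow_const 2).mul
      ((SG.measurable_propDens η).mul ((hp.comp measurable_fst).min (hp.comp measurable_snd)))
  have hWV0 : ∀ x y : Fin d → ℝ, 0 ≤ p x * p y := fun x y => mul_nonneg (hpnn x) (hpnn y)
  have hWV1 : ∀ x y : Fin d → ℝ, p x * p y ≤ Mv * Mv :=
    fun x y => mul_le_mul (hpM x) (hpM y) (hpnn y) hMv0
  set qmax := (2*Real.pi*η)^(-(d:ℝ)/2) with hqmaxdef
  have hqmax0 : 0 ≤ qmax := Real.rpow_nonneg (by positivity) _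
  have hWD0 : ∀ x y : Fin d → ℝ, 0 ≤ propDens d η x y * min (p x) (p y) := by
    intro x y
    apply mul_nonneg _ (le_min (hpnn x) (hpnn y))
    unfold propDens
    have : (0:ℝ) ≤ (2*Real.pi*η)^(-(d:ℝ)/2) := Real.rpow_nonneg (by positivity) _
    positivity
  have hWD1 : ∀ x y : Fin d → ℝ, propDens d η x y * min (p x) (p y) ≤ qmax * Mv :=
    fun x y => mul_le_mul (SG.prop_ub hη0 x y) (le_trans (min_le_left _ _) (hpM x))
      (le_min (hpnn x) (hpnn y)) hqmax0
  -- convert the two sides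
  have hVeq : (∫ x in Bs, ∫ y in Bs, (g x - g y)^2 * p x * p y)
      = (∫⁻ x, ∫⁻ y, (Bs.indicator (fun _ => (1:ℝ≥0∞)) x)
          * (Bs.indicator (fun _ => (1:ℝ≥0∞)) y)
          * ENNReal.ofReal ((g' x - g' y)^2 * (p x * p y))).toReal := by
    rw [show (∫ x in Bs, ∫ y in Bs, (g x - g y)^2 * p x * p y)
        = ∫ x in Bs, ∫ y in Bs, (g x - g y)^2 * (p x * p y) from
      setIntegral_congr_fun hBmeas (fun x _ =>
        setIntegral_congr_fun hBmeas (fun y _ => by ring))]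
    rw [SG.double_congr_g hBmeas hgg' (fun x y => p x * p y)]
    exact SG.double_int hBmeas _ hFV (fun x y => mul_nonneg (sq_nonneg _) (hWV0 x y))
      (SG.inner_fin g' (Mv*Mv) (mul_nonneg hMv0 hMv0) hIB hvolB hg'meas hBmeas _ hWV0 hWV1)
  have hDeq : (∫ x in Bs, ∫ y in Bs, (g x - g y)^2 * propDens d η x y * min (p x) (p y))
      = (∫⁻ x, ∫⁻ y, (Bs.indicator (fun _ => (1:ℝ≥0∞)) x)
          * (Bs.indicator (fun _ => (1:ℝ≥0∞)) y)
          * ENNReal.ofReal ((g' x - g' y)^2 * (propDens d η x y * min (p x) (p y)))).toReal := by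
    rw [show (∫ x in Bs, ∫ y in Bs, (g x - g y)^2 * propDens d η x y * min (p x) (p y))
        = ∫ x in Bs, ∫ y in Bs, (g x - g y)^2 * (propDens d η x y * min (p x) (p y)) from
      setIntegral_congr_fun hBmeas (fun x _ =>
        setIntegral_congr_fun hBmeas (fun y _ => by ring))]
    rw [SG.double_congr_g hBmeas hgg' (fun x y => propDens d η x y * min (p x) (p y))]
    exact SG.double_int hBmeas _ hFD (fun x y => mul_nonneg (sq_nonneg _) (hWD0 x y))
      (SG.inner_fin g' (qmax*Mv) (mul_nonneg hqmax0 hMv0) hIB hvolB hg'meas hBmeas _ hWD0 hWD1)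
  have hD2fin : (∫⁻ x, ∫⁻ y, (Bs.indicator (fun _ => (1:ℝ≥0∞)) x)
      * (Bs.indicator (fun _ => (1:ℝ≥0∞)) y)
      * ENNReal.ofReal ((g' x - g' y)^2 * (propDens d η x y * min (p x) (p y)))) ≠ ⊤ :=
    SG.double_fin g' (qmax*Mv) (mul_nonneg hqmax0 hMv0) hIB hvolB hg'meas hBmeas _ hWD0 hWD1
  set cR := γmin ^ ((d : ℝ) / 2) * η ^ ((3:ℝ)/2) / (13 * R ^ (d + 3)) with hcRdef
  have hc0 : 0 ≤ cR := by
    rw [hcRdef]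
    have h1 : 0 ≤ γmin ^ ((d:ℝ)/2) := Real.rpow_nonneg hγ0.le _
    have h2 : 0 ≤ η ^ ((3:ℝ)/2) := Real.rpow_nonneg hη0.le _
    positivity
  -- ENNReal chain
  have hq0' : ENNReal.ofReal qmin ≠ 0 := by
    simp only [ne_eq, ENNReal.ofReal_eq_zero, not_le]
    exact hqmin
  have hcoef : ENNReal.ofReal cR * ((L:ℝ≥0∞)^(d+2) * ENNReal.ofReal Mv)
      ≤ ENNReal.ofReal qmin := by
    have hLpow : ((L:ℝ≥0∞))^(d+2) = ENNReal.ofReal ((L:ℝ)^(d+2)) := by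
      rw [ENNReal.ofReal_pow (by positivity), ENNReal.ofReal_natCast]
    rw [hLpow, ← ENNReal.ofReal_mul (by positivity), ← ENNReal.ofReal_mul hc0]
    exact ENNReal.ofReal_le_ofReal hscal
  set V2 := ∫⁻ x, ∫⁻ y, (Bs.indicator (fun _ => (1:ℝ≥0∞)) x)
      * (Bs.indicator (fun _ => (1:ℝ≥0∞)) y)
      * ENNReal.ofReal ((g' x - g' y)^2 * (p x * p y)) with hV2def
  set D2 := ∫⁻ x, ∫⁻ y, (Bs.indicator (fun _ => (1:ℝ≥0∞)) x)
      * (Bs.indicator (fun _ => (1:ℝ≥0∞)) y)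
      * ENNReal.ofReal ((g' x - g' y)^2 * (propDens d η x y * min (p x) (p y))) with hD2def
  have hchain : ENNReal.ofReal cR * V2 ≤ D2 := by
    calc ENNReal.ofReal cR * V2
        ≤ ENNReal.ofReal cR * ((L:ℝ≥0∞)^(d+2) * ENNReal.ofReal Mv
            * (ENNReal.ofReal qmin)⁻¹ * D2) := mul_le_mul_right hcore _
      _ = (ENNReal.ofReal cR * ((L:ℝ≥0∞)^(d+2) * ENNReal.ofReal Mv))
            * ((ENNReal.ofReal qmin)⁻¹ * D2) := by ring
      _ ≤ ENNReal.ofReal qmin * ((ENNReal.ofReal qmin)⁻¹ * D2) :=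
          mul_le_mul_left hcoef _
      _ = (ENNReal.ofReal qmin * (ENNReal.ofReal qmin)⁻¹) * D2 := by ring
      _ = 1 * D2 := by rw [ENNReal.mul_inv_cancel hq0' ENNReal.ofReal_ne_top]
      _ = D2 := one_mul _
  have hfinal : cR * V2.toReal ≤ D2.toReal := by
    have h1 : cR * V2.toReal = (ENNReal.ofReal cR * V2).toReal := by
      rw [ENNReal.toReal_mul, ENNReal.toReal_ofReal hc0]
    rw [h1]
    exact ENNReal.toReal_mono hD2fin hchain
  -- finish
  show cR * restVarDens p Bs g ≤ mhRestDirichlet η p Bs g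
  unfold restVarDens mhRestDirichlet
  rw [hVeq, hDeq]
  linarith
end
end

section
/- Let D = max{ max_{k∈[n]} ‖μ_k‖, √γ_min }. For i ∈ [L], j ∈ [n], let p̃_{(i,j)} be the density of N(μ_j, β_i⁻¹Σ) and define p̃_i(j|x) = w_j p̃_{(i,j)}(x) / ∑_{k=1}^n w_k p̃_{(i,k)}(x). Then for all i ∈ [L], j ∈ [n], and x ∈ ℝ^d: (1) p̃_{(i,j)}(x) ≥ (β_i/(2πγ_max))^{d/2} exp( −(β_i/(2γ_min)) (‖x‖ + D)² ), and (2) p̃_i(j|x) ≥ w_j exp( −(β_i/γ_min) (‖x‖ + D)² ). -/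
open MeasureTheory Matrix

noncomputable section

lemma quad_lower {d : ℕ} (A : Matrix (Fin d) (Fin d) ℝ) (hA : A.IsHermitian) (c : ℝ)
    (hc : ∀ i, c ≤ hA.eigenvalues i) (v : Fin d → ℝ) :
    c * (v ⬝ᵥ v) ≤ v ⬝ᵥ (A *ᵥ v) := by
  set U : Matrix (Fin d) (Fin d) ℝ := (hA.eigenvectorUnitary : Matrix (Fin d) (Fin d) ℝ) with hU
  set y : Fin d → ℝ := star U *ᵥ v with hy
  have hUst : U * star U = 1 := (Matrix.mem_unitaryGroup_iff).mp hA.eigenvectorUnitary.2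
  have hvU : v ᵥ* U = y := by
    rw [hy, star_eq_conjTranspose, conjTranspose_eq_transpose_of_trivial, mulVec_transpose]
  have key : ∀ (M : Matrix (Fin d) (Fin d) ℝ),
      v ⬝ᵥ ((U * M * star U) *ᵥ v) = y ⬝ᵥ (M *ᵥ y) := by
    intro M
    rw [← mulVec_mulVec, ← mulVec_mulVec, dotProduct_mulVec, hvU, ← hy]
  have h1 : v ⬝ᵥ (A *ᵥ v) = ∑ i, hA.eigenvalues i * y i ^ 2 := by
    conv_lhs => rw [hA.spectral_theorem]
    rw [Unitary.conjStarAlgAut_apply, ← hU, key]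
    simp [dotProduct, mulVec_diagonal, Function.comp]
    ring_nf
    exact Finset.sum_congr rfl fun i _ => mul_comm _ _
  have h2 : v ⬝ᵥ v = ∑ i, y i ^ 2 := by
    have h : v ⬝ᵥ v = v ⬝ᵥ ((U * 1 * star U) *ᵥ v) := by rw [mul_one, hUst, one_mulVec]
    rw [h, key]
    simp [dotProduct]
    ring_nf
  rw [h1, h2, Finset.mul_sum]
  exact Finset.sum_le_sum fun i _ => mul_le_mul_of_nonneg_right (hc i) (sq_nonneg _)

lemma euclNorm_nonneg {d : ℕ} (v : Fin d → ℝ) : 0 ≤ euclNorm v := Real.sqrt_nonneg _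

lemma euclNorm_sq {d : ℕ} (v : Fin d → ℝ) : euclNorm v ^ 2 = ∑ k, v k ^ 2 :=
  Real.sq_sqrt (by positivity)

lemma euclNorm_eq {d : ℕ} (v : Fin d → ℝ) :
    euclNorm v = ‖(WithLp.equiv 2 (Fin d → ℝ)).symm v‖ := by
  rw [EuclideanSpace.norm_eq]
  simp [euclNorm, sq_abs]

lemma euclNorm_sub_le {d : ℕ} (x m : Fin d → ℝ) :
    euclNorm (x - m) ≤ euclNorm x + euclNorm m := by
  rw [euclNorm_eq, euclNorm_eq, euclNorm_eq]
  rw [show (WithLp.equiv 2 (Fin d → ℝ)).symm (x - m)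
      = (WithLp.equiv 2 (Fin d → ℝ)).symm x - (WithLp.equiv 2 (Fin d → ℝ)).symm m from rfl]
  exact norm_sub_le _ _

lemma dot_le_norms {d : ℕ} (v u : Fin d → ℝ) : v ⬝ᵥ u ≤ euclNorm v * euclNorm u := by
  have h := Finset.sum_mul_sq_le_sq_mul_sq Finset.univ v u
  calc v ⬝ᵥ u ≤ |v ⬝ᵥ u| := le_abs_self _
    _ = Real.sqrt ((v ⬝ᵥ u) ^ 2) := (Real.sqrt_sq_eq_abs _).symm
    _ ≤ Real.sqrt ((∑ k, v k ^ 2) * (∑ k, u k ^ 2)) := Real.sqrt_le_sqrt h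
    _ = euclNorm v * euclNorm u := by
        rw [euclNorm, euclNorm, ← Real.sqrt_mul (by positivity)]

lemma quad_nonneg {d : ℕ} {Sig : Matrix (Fin d) (Fin d) ℝ} (hSig : Sig.PosDef)
    (v : Fin d → ℝ) : 0 ≤ quadForm Sig v := by
  have := (hSig.inv.posSemidef).re_dotProduct_nonneg v
  simpa [quadForm] using this

lemma quadForm_le {d : ℕ} {Sig : Matrix (Fin d) (Fin d) ℝ} (hSig : Sig.PosDef)
    {γmin : ℝ} (hγmin : IsLeast (Set.range hSig.isHermitian.eigenvalues) γmin)
    (v : Fin d → ℝ) : quadForm Sig v ≤ γmin⁻¹ * euclNorm v ^ 2 := by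
  obtain ⟨i0, hi0⟩ := hγmin.1
  have hγ : 0 < γmin := hi0 ▸ hSig.eigenvalues_pos i0
  set u : Fin d → ℝ := Sig⁻¹ *ᵥ v with hu
  have hSu : Sig *ᵥ u = v := by
    rw [hu, mulVec_mulVec, Matrix.mul_nonsing_inv _ (isUnit_iff_ne_zero.mpr hSig.det_pos.ne'),
      one_mulVec]
  have h1 : γmin * (u ⬝ᵥ u) ≤ u ⬝ᵥ v := by
    have := quad_lower Sig hSig.isHermitian γmin (fun i => hγmin.2 ⟨i, rfl⟩) u
    rwa [hSu] at this
  have huu : u ⬝ᵥ u = euclNorm u ^ 2 := by rw [euclNorm_sq]; simp [dotProduct, sq]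
  have hvu : u ⬝ᵥ v = v ⬝ᵥ u := dotProduct_comm _ _
  have hCS : v ⬝ᵥ u ≤ euclNorm v * euclNorm u := dot_le_norms v u
  have hq : quadForm Sig v = v ⬝ᵥ u := rfl
  rw [hq, inv_mul_eq_div, le_div_iff₀ hγ]
  have h1' : γmin * euclNorm u ^ 2 ≤ v ⬝ᵥ u := by rw [← huu, ← hvu]; exact h1
  have h2 := mul_le_mul_of_nonneg_left hCS hγ.le
  have h3 := mul_le_mul_of_nonneg_left h1' hγ.le
  nlinarith [sq_nonneg (γmin * euclNorm u - euclNorm v), euclNorm_nonneg u, euclNorm_nonneg v]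

theorem stmt12 (d L n : ℕ) (hn : 0 < n) (hL : 0 < L)
    (μ : Fin n → Fin d → ℝ)
    (Sig : Matrix (Fin d) (Fin d) ℝ) (hSig : Sig.PosDef)
    (γmax γmin : ℝ)
    (hγmax : IsGreatest (Set.range hSig.isHermitian.eigenvalues) γmax)
    (hγmin : IsLeast (Set.range hSig.isHermitian.eigenvalues) γmin)
    (w : Fin n → ℝ) (hw : ∀ j, 0 < w j) (hw1 : ∑ j, w j = 1)
    (β : Fin L → ℝ) (hβ : ∀ i, 0 < β i ∧ β i ≤ 1)
    (D : ℝ) (hD : D = max (sSup (Set.range fun k => euclNorm (μ k))) (Real.sqrt γmin)) :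
    ∀ (i : Fin L) (j : Fin n) (x : Fin d → ℝ),
      (β i / (2 * Real.pi * γmax)) ^ ((d : ℝ) / 2) *
          Real.exp (-(β i / (2 * γmin)) * (euclNorm x + D) ^ 2)
        ≤ gaussDens Sig (β i) (μ j) x ∧
      w j * Real.exp (-(β i / γmin) * (euclNorm x + D) ^ 2)
        ≤ w j * gaussDens Sig (β i) (μ j) x / ∑ k, w k * gaussDens Sig (β i) (μ k) x := by
  intro i j x
  obtain ⟨hβpos, hβ1⟩ := hβ i
  obtain ⟨imax, himax⟩ := hγmax.1
  have hγmaxpos : 0 < γmax := himax ▸ hSig.eigenvalues_pos imax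
  obtain ⟨imin, himin⟩ := hγmin.1
  have hγminpos : 0 < γmin := himin ▸ hSig.eigenvalues_pos imin
  have hdet : 0 < Sig.det := hSig.det_pos
  have hπ : 0 < Real.pi := Real.pi_pos
  -- D bounds
  have hD0 : 0 ≤ D := hD ▸ le_trans (Real.sqrt_nonneg _) (le_max_right _ _)
  have hDμ : ∀ k, euclNorm (μ k) ≤ D := by
    intro k
    rw [hD]
    exact le_trans (le_csSup ((Set.finite_range _).bddAbove) ⟨k, rfl⟩) (le_max_left _ _)
  set X : ℝ := euclNorm x + D with hX
  have hX0 : 0 ≤ X := add_nonneg (euclNorm_nonneg x) hD0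
  -- quadratic form bound
  have hquad : ∀ k, quadForm Sig (x - μ k) ≤ γmin⁻¹ * X ^ 2 := by
    intro k
    refine (quadForm_le hSig hγmin (x - μ k)).trans ?_
    have h1 : euclNorm (x - μ k) ≤ X :=
      (euclNorm_sub_le x (μ k)).trans (by rw [hX]; gcongr; exact hDμ k)
    have h2 : euclNorm (x - μ k) ^ 2 ≤ X ^ 2 := by
      apply pow_le_pow_left₀ (euclNorm_nonneg _) h1
    exact mul_le_mul_of_nonneg_left h2 (by positivity)
  have hq0 : ∀ k, 0 ≤ quadForm Sig (x - μ k) := fun k => quad_nonneg hSig _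
  -- exponential bounds
  have hhalf : (0:ℝ) ≤ β i / 2 := by positivity
  have hmain := mul_le_mul_of_nonneg_left (hquad j) hhalf
  have heq : β i / 2 * (γmin⁻¹ * X ^ 2) = β i / (2 * γmin) * X ^ 2 := by
    field_simp
  have hexp1 : -(β i / (2 * γmin)) * X ^ 2 ≤ -(β i / 2) * quadForm Sig (x - μ j) := by
    linarith [hmain, heq]
  have hdd : β i / (2 * γmin) ≤ β i / γmin :=
    div_le_div_of_nonneg_left hβpos.le hγminpos (by linarith)
  have hexp2 : -(β i / γmin) * X ^ 2 ≤ -(β i / 2) * quadForm Sig (x - μ j) := by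
    have := mul_le_mul_of_nonneg_right hdd (sq_nonneg X)
    linarith [hmain, heq]
  -- constant bound
  set C : ℝ := (β i / (2 * Real.pi)) ^ ((d : ℝ) / 2) / Real.sqrt Sig.det with hC
  have hCpos : 0 < C := by
    rw [hC]
    positivity
  have hdetle : Sig.det ≤ γmax ^ d := by
    rw [show Sig.det = ∏ k, hSig.isHermitian.eigenvalues k from
      (by exact_mod_cast hSig.isHermitian.det_eq_prod_eigenvalues)]
    calc ∏ k, hSig.isHermitian.eigenvalues k ≤ ∏ _k : Fin d, γmax :=
          Finset.prod_le_prod (fun k _ => (hSig.eigenvalues_pos k).le)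
            (fun k _ => hγmax.2 ⟨k, rfl⟩)
      _ = γmax ^ d := by rw [Finset.prod_const, Finset.card_univ, Fintype.card_fin]
  have hsqrtle : Real.sqrt Sig.det ≤ γmax ^ ((d : ℝ) / 2) := by
    refine (Real.sqrt_le_sqrt hdetle).trans_eq ?_
    rw [Real.sqrt_eq_rpow, ← Real.rpow_natCast γmax d, ← Real.rpow_mul hγmaxpos.le]
    congr 1
    ring
  have hconst : (β i / (2 * Real.pi * γmax)) ^ ((d : ℝ) / 2) ≤ C := by
    have h1 : (β i / (2 * Real.pi * γmax)) ^ ((d : ℝ) / 2)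
        = (β i / (2 * Real.pi)) ^ ((d : ℝ) / 2) / γmax ^ ((d : ℝ) / 2) := by
      rw [← Real.div_rpow (by positivity) hγmaxpos.le, div_div]
    rw [h1, hC]
    apply div_le_div_of_nonneg_left (by positivity) (Real.sqrt_pos.mpr hdet) hsqrtle
  -- part 1
  have hgauss : ∀ k, gaussDens Sig (β i) (μ k) x
      = C * Real.exp (-(β i / 2) * quadForm Sig (x - μ k)) := fun k => rfl
  constructor
  · rw [hgauss j]
    exact mul_le_mul hconst (Real.exp_le_exp.mpr hexp1) (Real.exp_pos _).le hCpos.le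
  -- part 2
  · have hpk_pos : ∀ k, 0 < gaussDens Sig (β i) (μ k) x := by
      intro k; rw [hgauss k]; positivity
    have hpk_le : ∀ k, gaussDens Sig (β i) (μ k) x ≤ C := by
      intro k
      rw [hgauss k]
      calc C * Real.exp (-(β i / 2) * quadForm Sig (x - μ k)) ≤ C * 1 := by
            gcongr
            exact Real.exp_le_one_iff.mpr (by nlinarith [hq0 k])
        _ = C := mul_one C
    have hn' : Nonempty (Fin n) := ⟨⟨0, hn⟩⟩
    have hS_pos : 0 < ∑ k, w k * gaussDens Sig (β i) (μ k) x :=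
      Finset.sum_pos (fun k _ => mul_pos (hw k) (hpk_pos k)) Finset.univ_nonempty
    have hS_le : ∑ k, w k * gaussDens Sig (β i) (μ k) x ≤ C := by
      calc ∑ k, w k * gaussDens Sig (β i) (μ k) x ≤ ∑ k, w k * C :=
            Finset.sum_le_sum fun k _ => mul_le_mul_of_nonneg_left (hpk_le k) (hw k).le
        _ = C := by rw [← Finset.sum_mul, hw1, one_mul]
    calc w j * Real.exp (-(β i / γmin) * X ^ 2)
        ≤ w j * Real.exp (-(β i / 2) * quadForm Sig (x - μ j)) := by
          exact mul_le_mul_of_nonneg_left (Real.exp_le_exp.mpr hexp2) (hw j).le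
      _ = w j * gaussDens Sig (β i) (μ j) x / C := by
          rw [hgauss j]; field_simp
      _ ≤ w j * gaussDens Sig (β i) (μ j) x / ∑ k, w k * gaussDens Sig (β i) (μ k) x := by
          apply div_le_div_of_nonneg_left (mul_pos (hw j) (hpk_pos j)).le hS_pos hS_le
end
end

section
/- Let L > 0 be an integer and suppose the positive numbers Ẑ₁,…,Ẑ_L and Z₁,…,Z_L satisfy (Ẑ_i/Z_i)/(Ẑ₁/Z₁) ∈ [(1 − 1/L)^{i−1}, (1 + 1/L)^{i−1}] for all i ∈ [L]. Define r_i = (Z_i/Ẑ_i) / ∑_{k=1}^L (Z_k/Ẑ_k). Then e^{−2}/L ≤ r_i ≤ e²/L for all i ∈ [L], and consequently r := min_{i∈[L]} r_i / max_{i∈[L]} r_i ≥ e^{−4}. -/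
open Finset

theorem stmt16 (L : ℕ) (hL : 2 ≤ L)
    (Z Zhat : Fin L → ℝ) (hZ : ∀ i, 0 < Z i) (hZhat : ∀ i, 0 < Zhat i)
    (hest : ∀ i : Fin L,
      (Zhat i / Z i) / (Zhat ⟨0, by omega⟩ / Z ⟨0, by omega⟩) ∈
        Set.Icc ((1 - 1 / (L : ℝ)) ^ (i : ℕ)) ((1 + 1 / (L : ℝ)) ^ (i : ℕ)))
    (r : Fin L → ℝ)
    (hr : ∀ i, r i = (Z i / Zhat i) / ∑ k, Z k / Zhat k) :
    (∀ i, Real.exp (-2) / L ≤ r i ∧ r i ≤ Real.exp 2 / L) ∧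
      Real.exp (-4) ≤ (⨅ i, r i) / (⨆ i, r i) := by
  have hLR : (2:ℝ) ≤ (L:ℝ) := by exact_mod_cast hL
  have hL0 : (0:ℝ) < L := by linarith
  have hL1 : (0:ℝ) < (L:ℝ) - 1 := by linarith
  set i0 : Fin L := ⟨0, by omega⟩ with hi0
  set w : Fin L → ℝ := fun i => Z i / Zhat i with hwdef
  have hwpos : ∀ i, 0 < w i := fun i => div_pos (hZ i) (hZhat i)
  have hratio : ∀ i, (Zhat i / Z i) / (Zhat i0 / Z i0) = w i0 / w i := by
    intro i
    have := (hZ i).ne'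
    have := (hZhat i).ne'
    have := (hZ i0).ne'
    have := (hZhat i0).ne'
    field_simp [w]
    simp only [hwdef]
    field_simp
  -- upper bound on (1+1/L)^i
  have hexp1 : ∀ i : Fin L, (1 + 1/(L:ℝ)) ^ (i:ℕ) ≤ Real.exp 1 := by
    intro i
    have h1 : (1 : ℝ) + 1/L ≤ Real.exp (1/L) := by
      have := Real.add_one_le_exp (1/(L:ℝ)); linarith
    calc (1 + 1/(L:ℝ)) ^ (i:ℕ) ≤ Real.exp (1/L) ^ (i:ℕ) :=
          pow_le_pow_left₀ (by positivity) h1 _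
      _ = Real.exp ((i:ℕ) * (1/L)) := (Real.exp_nat_mul _ _).symm
      _ ≤ Real.exp 1 := by
          apply Real.exp_le_exp.mpr
          rw [mul_one_div, div_le_one hL0]
          exact_mod_cast i.isLt.le
  -- lower bound on (1-1/L)^i
  have hexp2 : ∀ i : Fin L, Real.exp (-1) ≤ (1 - 1/(L:ℝ)) ^ (i:ℕ) := by
    intro i
    have key : Real.exp (-(1/((L:ℝ)-1))) ≤ 1 - 1/L := by
      have h1 : (1:ℝ) + 1/((L:ℝ)-1) ≤ Real.exp (1/((L:ℝ)-1)) := by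
        have := Real.add_one_le_exp (1/((L:ℝ)-1)); linarith
      have h2 : (0:ℝ) < 1 + 1/((L:ℝ)-1) := by positivity
      have h3 : ((1:ℝ) + 1/((L:ℝ)-1))⁻¹ = 1 - 1/L := by
        field_simp
        ring
      rw [Real.exp_neg, ← h3]
      exact inv_anti₀ h2 h1
    have hiL : ((i:ℕ):ℝ) ≤ (L:ℝ) - 1 := by
      have h : ((i:ℕ):ℝ) + 1 ≤ (L:ℝ) := by exact_mod_cast i.isLt
      linarith
    calc Real.exp (-1) ≤ Real.exp ((i:ℕ) * (-(1/((L:ℝ)-1)))) := by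
          apply Real.exp_le_exp.mpr
          rw [mul_neg, neg_le_neg_iff, mul_one_div, div_le_one hL1]
          exact hiL
      _ = Real.exp (-(1/((L:ℝ)-1))) ^ (i:ℕ) := Real.exp_nat_mul _ _
      _ ≤ (1 - 1/(L:ℝ)) ^ (i:ℕ) := pow_le_pow_left₀ (Real.exp_pos _).le key _
  -- bounds on w i relative to w i0
  have hwub : ∀ i, w i ≤ w i0 * Real.exp 1 := by
    intro i
    have h := (hest i).1
    rw [hratio i] at h
    have h2 : Real.exp (-1) ≤ w i0 / w i := le_trans (hexp2 i) h
    have h3 : Real.exp (-1) * w i ≤ w i0 := (le_div_iff₀ (hwpos i)).mp h2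
    have he : Real.exp (-1) * Real.exp 1 = 1 := by
      rw [← Real.exp_add]; norm_num
    nlinarith [Real.exp_pos (1:ℝ), (hwpos i).le]
  have hwlb : ∀ i, w i0 * Real.exp (-1) ≤ w i := by
    intro i
    have h := (hest i).2
    rw [hratio i] at h
    have h2 : w i0 / w i ≤ Real.exp 1 := le_trans h (hexp1 i)
    have h3 : w i0 ≤ Real.exp 1 * w i := (div_le_iff₀ (hwpos i)).mp h2
    have he : Real.exp (-1) * Real.exp 1 = 1 := by
      rw [← Real.exp_add]; norm_num
    nlinarith [Real.exp_pos (-1:ℝ), (hwpos i).le]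
  -- sum bounds
  have hSub : ∑ k, w k ≤ (L:ℝ) * (w i0 * Real.exp 1) := by
    calc ∑ k, w k ≤ ∑ _k : Fin L, w i0 * Real.exp 1 :=
          Finset.sum_le_sum fun k _ => hwub k
      _ = (L:ℝ) * (w i0 * Real.exp 1) := by
          simp [Finset.sum_const, mul_comm]
  have hSlb : (L:ℝ) * (w i0 * Real.exp (-1)) ≤ ∑ k, w k := by
    calc (L:ℝ) * (w i0 * Real.exp (-1)) = ∑ _k : Fin L, w i0 * Real.exp (-1) := by
          simp [Finset.sum_const, mul_comm]
      _ ≤ ∑ k, w k := Finset.sum_le_sum fun k _ => hwlb k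
  have hSpos : 0 < ∑ k, w k := Finset.sum_pos (fun k _ => hwpos k) ⟨i0, mem_univ i0⟩
  -- bounds on r
  have hrlb : ∀ i, Real.exp (-2) / L ≤ r i := by
    intro i
    rw [hr i]
    show Real.exp (-2) / L ≤ w i / ∑ k, w k
    rw [div_le_div_iff₀ hL0 hSpos]
    have h1 : Real.exp (-2) * (∑ k, w k) ≤ Real.exp (-2) * ((L:ℝ) * (w i0 * Real.exp 1)) :=
      mul_le_mul_of_nonneg_left hSub (Real.exp_pos _).le
    have h2 : Real.exp (-2) * ((L:ℝ) * (w i0 * Real.exp 1)) = w i0 * Real.exp (-1) * L := by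
      have h : Real.exp (-2) * Real.exp 1 = Real.exp (-1) := by
        rw [← Real.exp_add]; norm_num
      linear_combination ((L:ℝ) * w i0) * h
    have h3 : w i0 * Real.exp (-1) * L ≤ w i * L :=
      mul_le_mul_of_nonneg_right (hwlb i) hL0.le
    linarith
  have hrub : ∀ i, r i ≤ Real.exp 2 / L := by
    intro i
    rw [hr i]
    show w i / ∑ k, w k ≤ Real.exp 2 / L
    rw [div_le_div_iff₀ hSpos hL0]
    have h1 : Real.exp 2 * ((L:ℝ) * (w i0 * Real.exp (-1))) ≤ Real.exp 2 * (∑ k, w k) :=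
      mul_le_mul_of_nonneg_left hSlb (Real.exp_pos _).le
    have h2 : Real.exp 2 * ((L:ℝ) * (w i0 * Real.exp (-1))) = w i0 * Real.exp 1 * L := by
      have h : Real.exp 2 * Real.exp (-1) = Real.exp 1 := by
        rw [← Real.exp_add]; norm_num
      linear_combination ((L:ℝ) * w i0) * h
    have h3 : w i * L ≤ w i0 * Real.exp 1 * L :=
      mul_le_mul_of_nonneg_right (hwub i) hL0.le
    linarith
  refine ⟨fun i => ⟨hrlb i, hrub i⟩, ?_⟩
  haveI : Nonempty (Fin L) := ⟨i0⟩
  have hinf : Real.exp (-2) / L ≤ ⨅ i, r i := le_ciInf hrlb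
  have hsup : (⨆ i, r i) ≤ Real.exp 2 / L := ciSup_le hrub
  have hlbpos : (0:ℝ) < Real.exp (-2) / L := by positivity
  have hsuppos : 0 < ⨆ i, r i :=
    lt_of_lt_of_le hlbpos (le_trans (hrlb i0) (le_ciSup (Set.Finite.bddAbove (Set.finite_range r)) i0))
  have heq : Real.exp (-4) = (Real.exp (-2) / L) / (Real.exp 2 / L) := by
    have hLne : (L:ℝ) ≠ 0 := hL0.ne'
    rw [div_div_div_comm, div_self hLne, div_one, ← Real.exp_sub]
    norm_num
  rw [heq]
  exact div_le_div₀ (le_trans hlbpos.le hinf) hinf hsuppos hsup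
end

section
/- Let X follow the d-dimensional Gaussian distribution with mean μ and positive semidefinite covariance matrix Σ, and let ‖Σ‖ denote the largest eigenvalue of Σ. Then for any ε ∈ (0,1), P( ‖X‖ ≤ ‖μ‖ + √(d‖Σ‖) + √(2‖Σ‖ log(1/ε)) ) ≥ 1 − ε. -/
open MeasureTheory ProbabilityTheory Matrix

noncomputable section

open Real
open scoped ENNReal NNReal

section Aux
lemma gauss_sq_int {l : ℝ} (hl : l < 1/2) :
    ∫ x, Real.exp (l * x^2) ∂gaussianReal 0 1 = (Real.sqrt (1 - 2*l))⁻¹ := by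
  have hb : (0:ℝ) < 1/2 - l := by linarith
  rw [gaussianReal_of_var_ne_zero _ one_ne_zero,
    show (gaussianPDF 0 1) = (fun x => ((Real.toNNReal (gaussianPDFReal 0 1 x) : ℝ≥0) : ℝ≥0∞)) from rfl,
    integral_withDensity_eq_integral_smul (show Measurable fun x => (gaussianPDFReal 0 1 x).toNNReal from measurable_real_toNNReal.comp (measurable_gaussianPDFReal 0 1))]
  have h1 : ∀ x : ℝ, (Real.toNNReal (gaussianPDFReal 0 1 x)) • Real.exp (l * x^2)
      = (Real.sqrt (2*π))⁻¹ * Real.exp (-(1/2 - l) * x^2) := by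
    intro x
    rw [NNReal.smul_def, Real.coe_toNNReal _ (gaussianPDFReal_nonneg _ _ _), gaussianPDFReal]
    simp only [NNReal.coe_one, mul_one, sub_zero]
    rw [smul_eq_mul, mul_assoc, ← Real.exp_add]
    ring_nf
  simp_rw [h1]
  rw [integral_const_mul, integral_gaussian]
  rw [Real.sqrt_div (le_of_lt pi_pos), show (2:ℝ)*π = π*2 by ring, Real.sqrt_mul (le_of_lt pi_pos),
    show 1 - 2*l = (1/2 - l)*2 by ring, Real.sqrt_mul (le_of_lt hb)]
  have hπ : Real.sqrt π ≠ 0 := by positivity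
  have h2 : Real.sqrt (1/2 - l) ≠ 0 := by positivity
  have h3 : Real.sqrt 2 ≠ 0 := by positivity
  field_simp

lemma gauss_sq_integrable {l : ℝ} (hl : l < 1/2) :
    Integrable (fun x => Real.exp (l * x^2)) (gaussianReal 0 1) := by
  have hb : (0:ℝ) < 1/2 - l := by linarith
  rw [gaussianReal_of_var_ne_zero _ one_ne_zero,
    integrable_withDensity_iff (measurable_gaussianPDF 0 1)
      (Filter.Eventually.of_forall fun x => ENNReal.ofReal_lt_top)]
  have h1 : ∀ x : ℝ, Real.exp (l * x^2) * (gaussianPDF 0 1 x).toReal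
      = (√(2*π))⁻¹ * Real.exp (-(1/2 - l) * x^2) := by
    intro x
    rw [gaussianPDF, ENNReal.toReal_ofReal (gaussianPDFReal_nonneg _ _ _), gaussianPDFReal]
    simp only [NNReal.coe_one, mul_one, sub_zero]
    rw [mul_comm, mul_assoc, ← Real.exp_add]
    ring_nf
  exact (Integrable.const_mul (integrable_exp_neg_mul_sq hb) _).congr
    (Filter.Eventually.of_forall fun x => (h1 x).symm)

abbrev stdG : Measure ℝ := gaussianReal 0 1

lemma pi_integrable_prod {d : ℕ} {f : ℝ → ℝ} (hf : Integrable f stdG) :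
    Integrable (fun z : Fin d → ℝ => ∏ i, f (z i)) (Measure.pi fun _ => stdG) := by
  have := MeasureTheory.Integrable.fintype_prod (ι := Fin d) (f := fun _ => f) (μ := fun _ => stdG)
    (fun _ => hf)
  exact this

lemma pi_integral_pow {d : ℕ} (f : ℝ → ℝ) :
    ∫ z : Fin d → ℝ, ∏ i, f (z i) ∂(Measure.pi fun _ => stdG) = (∫ x, f x ∂stdG)^d := by
  have := MeasureTheory.integral_fintype_prod_eq_pow (ι := Fin d) f (μ := stdG)
  simpa using this

lemma chi_tail {d : ℕ} (hd : 1 ≤ d) {L : ℝ} (hL : 0 < L) :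
    ((Measure.pi fun _ : Fin d => stdG)
      {z | (Real.sqrt d + Real.sqrt (2*L))^2 ≤ ∑ i, z i^2}).toReal ≤ Real.exp (-L) := by
  set a : ℝ := Real.sqrt d with ha_def
  set b : ℝ := Real.sqrt (2*L) with hb_def
  have hdpos : (0:ℝ) < d := by exact_mod_cast hd
  have ha : 0 < a := Real.sqrt_pos.2 hdpos
  have hb : 0 < b := Real.sqrt_pos.2 (by linarith)
  have ha2 : a^2 = (d:ℝ) := Real.sq_sqrt hdpos.le
  have hb2 : b^2 = 2*L := Real.sq_sqrt (by linarith)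
  set T : ℝ := (a+b)^2 with hT_def
  have hTpos : 0 < T := by positivity
  have hdT : (d:ℝ) < T := by nlinarith
  set l : ℝ := (1 - d/T)/2 with hl_def
  have hl0 : 0 ≤ l := by
    have : (d:ℝ)/T < 1 := (div_lt_one hTpos).2 hdT
    rw [hl_def]; linarith
  have hl : l < 1/2 := by
    have : 0 < (d:ℝ)/T := div_pos hdpos hTpos
    rw [hl_def]; linarith
  have h2l : 1 - 2*l = (d:ℝ)/T := by rw [hl_def]; ring
  set P : Measure (Fin d → ℝ) := Measure.pi fun _ : Fin d => stdG with hP_def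
  have hfun : (fun z : Fin d → ℝ => Real.exp (l * ∑ i, z i ^2))
      = fun z => ∏ i, Real.exp (l * z i ^2) := by
    funext z
    rw [Finset.mul_sum, Real.exp_sum]
  have h_int : Integrable (fun z : Fin d → ℝ => Real.exp (l * ∑ i, z i ^2)) P := by
    rw [hfun]; exact pi_integrable_prod (gauss_sq_integrable hl)
  have hmgf : mgf (fun z : Fin d → ℝ => ∑ i, z i ^2) P l = ((Real.sqrt ((d:ℝ)/T))⁻¹)^d := by
    rw [mgf]
    simp_rw [mul_comm l]
    have : (fun z : Fin d → ℝ => Real.exp ((∑ i, z i ^2) * l))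
        = fun z => ∏ i, Real.exp (l * z i ^2) := by
      funext z; rw [mul_comm, Finset.mul_sum, Real.exp_sum]
    rw [integral_congr_ae (Filter.Eventually.of_forall (fun z => congrFun this z)),
      hP_def, pi_integral_pow (fun x => Real.exp (l * x^2)), gauss_sq_int hl, h2l]
  have hch := measure_ge_le_exp_mul_mgf (X := fun z : Fin d → ℝ => ∑ i, z i ^2) (μ := P)
    T hl0 h_int
  rw [hmgf] at hch
  refine hch.trans ?_
  -- numeric inequality
  have hsq : (Real.sqrt ((d:ℝ)/T))⁻¹ = Real.sqrt (T/d) := by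
    rw [← Real.sqrt_inv, inv_div]
  rw [hsq]
  have hTd : 0 < T/(d:ℝ) := div_pos hTpos hdpos
  have h1 : Real.sqrt (T/(d:ℝ)) = Real.exp (Real.log (T/d) / 2) := by
    rw [← Real.log_sqrt hTd.le, Real.exp_log (Real.sqrt_pos.2 hTd)]
  rw [h1, ← Real.exp_nat_mul, ← Real.exp_add, Real.exp_le_exp]
  have hab : 0 < (a+b)/a := by positivity
  have hlog : Real.log (T/(d:ℝ)) ≤ 2*(b/a) := by
    have hTda : T/(d:ℝ) = ((a+b)/a)^2 := by
      rw [hT_def, ← ha2, div_pow]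
    rw [hTda, Real.log_pow]
    have := Real.log_le_sub_one_of_pos hab
    have h2 : (a+b)/a - 1 = b/a := by field_simp; ring
    push_cast
    nlinarith [this]
  have hlT : l * T = (T - d)/2 := by
    rw [hl_def]; field_simp
  have hdb : (d:ℝ)*(b/a) = a*b := by
    rw [← ha2]; field_simp
  have hTd2 : T - (d:ℝ) = 2*a*b + b^2 := by
    rw [hT_def, ← ha2]; ring
  have : (d:ℝ) * (Real.log (T/(d:ℝ))/2) ≤ a*b := by
    rw [← hdb]
    have := mul_le_mul_of_nonneg_left hlog hdpos.le
    linarith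
  linarith [this, hlT, hTd2, hb2]

lemma dot_transfer {d : ℕ} (x y : Fin d → ℝ) (M : Matrix (Fin d) (Fin d) ℝ) :
    x ⬝ᵥ (M *ᵥ y) = (Mᵀ *ᵥ x) ⬝ᵥ y := by
  rw [dotProduct_mulVec, mulVec_transpose]

lemma rayleigh {d : ℕ} {S : Matrix (Fin d) (Fin d) ℝ} (hS : S.PosSemidef) {s : ℝ}
    (hs : ∀ i, hS.isHermitian.eigenvalues i ≤ s) (v : Fin d → ℝ) :
    v ⬝ᵥ (S *ᵥ v) ≤ s * (v ⬝ᵥ v) := by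
  have hH := hS.isHermitian
  set U : Matrix (Fin d) (Fin d) ℝ :=
    (Matrix.IsHermitian.eigenvectorUnitary hH : Matrix (Fin d) (Fin d) ℝ) with hU
  have hstar : star U = Uᵀ := by
    ext i j
    simp [Matrix.star_apply]
  have h31 : U * Uᵀ = 1 := by
    rw [← hstar]
    exact_mod_cast Unitary.coe_mul_star_self (Matrix.IsHermitian.eigenvectorUnitary hH)
  set w : Fin d → ℝ := Uᵀ *ᵥ v with hw
  have hww : w ⬝ᵥ w = v ⬝ᵥ v := by
    rw [hw, dot_transfer, Matrix.transpose_transpose, mulVec_mulVec, h31, one_mulVec]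
  have hSv : v ⬝ᵥ (S *ᵥ v) = ∑ i, hH.eigenvalues i * (w i)^2 := by
    conv_lhs => rw [hH.spectral_theorem, Unitary.conjStarAlgAut_apply]
    rw [← hU, hstar, ← mulVec_mulVec, ← mulVec_mulVec, dot_transfer, dotProduct]
    congr 1
    funext i
    rw [Matrix.mulVec_diagonal, ← hw]
    simp [pow_two]
    ring
  rw [hSv, ← hww]
  have hsum : w ⬝ᵥ w = ∑ i, (w i)^2 := by
    simp [dotProduct, pow_two]
  rw [hsum, Finset.mul_sum]
  exact Finset.sum_le_sum fun i _ => by nlinarith [sq_nonneg (w i), hs i]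

lemma mulVec_sq_le {d : ℕ} {A S : Matrix (Fin d) (Fin d) ℝ} (hSig : S = A * Aᵀ)
    (hS : S.PosSemidef) {s : ℝ} (hs : ∀ i, hS.isHermitian.eigenvalues i ≤ s) (hs0 : 0 ≤ s)
    (v : Fin d → ℝ) : (A *ᵥ v) ⬝ᵥ (A *ᵥ v) ≤ s * (v ⬝ᵥ v) := by
  set w : Fin d → ℝ := A *ᵥ v with hw
  have hvv : 0 ≤ v ⬝ᵥ v := by
    simp only [dotProduct]
    exact Finset.sum_nonneg fun i _ => mul_self_nonneg _
  have hww : 0 ≤ w ⬝ᵥ w := by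
    simp only [dotProduct]
    exact Finset.sum_nonneg fun i _ => mul_self_nonneg _
  have h1 : w ⬝ᵥ w = (Aᵀ *ᵥ w) ⬝ᵥ v := by
    conv_lhs => rw [hw]
    rw [dot_transfer]
  have hcs : ((Aᵀ *ᵥ w) ⬝ᵥ v)^2 ≤ ((Aᵀ *ᵥ w) ⬝ᵥ (Aᵀ *ᵥ w)) * (v ⬝ᵥ v) := by
    simpa [dotProduct, pow_two] using
      Finset.sum_mul_sq_le_sq_mul_sq Finset.univ (fun i => (Aᵀ *ᵥ w) i) v
  have h2 : (Aᵀ *ᵥ w) ⬝ᵥ (Aᵀ *ᵥ w) ≤ s * (w ⬝ᵥ w) := by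
    have : (Aᵀ *ᵥ w) ⬝ᵥ (Aᵀ *ᵥ w) = w ⬝ᵥ (S *ᵥ w) := by
      rw [dot_transfer, Matrix.transpose_transpose, mulVec_mulVec, ← hSig, dotProduct_comm]
    rw [this]
    exact rayleigh hS hs w
  rcases eq_or_lt_of_le hww with h | h
  · rw [← h]; positivity
  · nlinarith [hcs, h2, h1]


lemma euclNorm_eq_norm {d : ℕ} (v : Fin d → ℝ) :
    euclNorm v = ‖(EuclideanSpace.equiv (Fin d) ℝ).symm v‖ := by
  rw [EuclideanSpace.norm_eq]
  simp [euclNorm, sq_abs]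

lemma euclNorm_triangle {d : ℕ} (a b : Fin d → ℝ) :
    euclNorm (a + b) ≤ euclNorm a + euclNorm b := by
  rw [euclNorm_eq_norm, euclNorm_eq_norm, euclNorm_eq_norm, map_add]
  exact norm_add_le _ _

lemma euclNorm_dot {d : ℕ} (v : Fin d → ℝ) : euclNorm v = Real.sqrt (v ⬝ᵥ v) := by
  simp [euclNorm, dotProduct, pow_two]

end Aux

/-- A `d`-dimensional Gaussian random vector with mean `μ` and covariance `Σ = A Aᵀ`,
realized as `X z = μ + A z` for `z` a vector of i.i.d. standard Gaussians. -/
theorem stmt18 (d : ℕ) (μ : Fin d → ℝ) (A : Matrix (Fin d) (Fin d) ℝ)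
    (Sig : Matrix (Fin d) (Fin d) ℝ) (hSig : Sig = A * Aᵀ)
    (hpsd : Sig.PosSemidef)
    (s : ℝ) (hs : IsGreatest (Set.range hpsd.isHermitian.eigenvalues) s)
    (ε : ℝ) (hε : ε ∈ Set.Ioo (0 : ℝ) 1) :
    ENNReal.ofReal (1 - ε) ≤
      (Measure.pi fun _ : Fin d => gaussianReal 0 1)
        {z | euclNorm (μ + A *ᵥ z) ≤
          euclNorm μ + Real.sqrt (d * s) + Real.sqrt (2 * s * Real.log (1 / ε))} := by
  obtain ⟨hε0, hε1⟩ := hε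
  set L : ℝ := Real.log (1/ε) with hL_def
  have hL : 0 < L := Real.log_pos ((one_lt_one_div hε0 hε1))
  have hs0 : 0 ≤ s := by
    obtain ⟨i, hi⟩ := hs.1
    exact hi ▸ hpsd.eigenvalues_nonneg i
  have hsub : ∀ i, hpsd.isHermitian.eigenvalues i ≤ s := fun i => hs.2 ⟨i, rfl⟩
  set T : ℝ := (Real.sqrt d + Real.sqrt (2*L))^2 with hT_def
  set P : Measure (Fin d → ℝ) := Measure.pi fun _ : Fin d => gaussianReal 0 1 with hP_def
  have hPprob : IsProbabilityMeasure P := by infer_instance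
  have hsubset : {z : Fin d → ℝ | ∑ i, z i ^2 ≤ T} ⊆
      {z | euclNorm (μ + A *ᵥ z) ≤
        euclNorm μ + Real.sqrt (d * s) + Real.sqrt (2 * s * L)} := by
    intro z hz
    simp only [Set.mem_setOf_eq] at hz ⊢
    have h1 : euclNorm (μ + A *ᵥ z) ≤ euclNorm μ + euclNorm (A *ᵥ z) := euclNorm_triangle _ _
    have hzz : z ⬝ᵥ z = ∑ i, z i ^2 := by simp [dotProduct, pow_two]
    have h2 : euclNorm (A *ᵥ z) ≤ Real.sqrt (s * T) := by
      rw [euclNorm_dot]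
      apply Real.sqrt_le_sqrt
      refine (mulVec_sq_le hSig hpsd hsub hs0 z).trans ?_
      rw [hzz]
      exact mul_le_mul_of_nonneg_left hz hs0
    have hTnn : 0 ≤ Real.sqrt (d:ℝ) + Real.sqrt (2*L) := by positivity
    have h3 : Real.sqrt (s * T) = Real.sqrt ((d:ℝ) * s) + Real.sqrt (2 * s * L) := by
      rw [hT_def, Real.sqrt_mul hs0, Real.sqrt_sq hTnn, mul_add,
        ← Real.sqrt_mul hs0, ← Real.sqrt_mul hs0, mul_comm s (d:ℝ),
        show s * (2*L) = 2*s*L by ring]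
    linarith [h1, h2, h3.symm.le]
  refine le_trans ?_ (measure_mono hsubset)
  rcases Nat.eq_zero_or_pos d with hd | hd
  · subst hd
    have : {z : Fin 0 → ℝ | ∑ i, z i ^2 ≤ T} = Set.univ := by
      ext z
      simp only [Set.mem_setOf_eq, Set.mem_univ, iff_true, Finset.univ_eq_empty,
        Finset.sum_empty]
      positivity
    rw [this, measure_univ]
    exact ENNReal.ofReal_le_one.2 (by linarith)
  · have htail := chi_tail hd hL
    have hexp : Real.exp (-L) = ε := by
      rw [hL_def, one_div, Real.log_inv, neg_neg, Real.exp_log hε0]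
    have h1 : P {z : Fin d → ℝ | T ≤ ∑ i, z i ^2} ≤ ENNReal.ofReal ε :=
      (ENNReal.le_ofReal_iff_toReal_le (measure_ne_top _ _) hε0.le).2
        (le_of_le_of_eq htail hexp)
    have hcompl : {z : Fin d → ℝ | ∑ i, z i ^2 ≤ T}ᶜ ⊆ {z | T ≤ ∑ i, z i ^2} := by
      intro z hz
      simp only [Set.mem_compl_iff, Set.mem_setOf_eq, not_le] at hz
      exact le_of_lt hz
    have h2 : P {z : Fin d → ℝ | ∑ i, z i ^2 ≤ T}ᶜ ≤ ENNReal.ofReal ε :=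
      (measure_mono hcompl).trans h1
    have h3 : (1:ℝ≥0∞) ≤ P {z : Fin d → ℝ | ∑ i, z i ^2 ≤ T} + ENNReal.ofReal ε := by
      calc (1:ℝ≥0∞) = P Set.univ := measure_univ.symm
        _ = P ({z : Fin d → ℝ | ∑ i, z i ^2 ≤ T} ∪ {z | ∑ i, z i ^2 ≤ T}ᶜ) := by
            rw [Set.union_compl_self]
        _ ≤ P {z : Fin d → ℝ | ∑ i, z i ^2 ≤ T} + P {z | ∑ i, z i ^2 ≤ T}ᶜ :=
            measure_union_le _ _
        _ ≤ _ := add_le_add le_rfl h2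
    rw [ENNReal.ofReal_sub _ hε0.le, ENNReal.ofReal_one]
    exact tsub_le_iff_right.2 h3
end
end
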